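/- arXiv:1908.11360 — 3 statements merged into one kernel-verified Lean document; each statement's English description precedes it below -/
import Mathlib

section
/- G3Ldm_n^m is sound and complete relative to the Hilbert calculus Ldm_n^m: for every formula φ ∈ L^m and every label w, the labelled sequent w:φ is derivable in G3Ldm_n^m if and only if ⊢_{Ldm_n^m} φ. -/
namespace Stit

/-- Formulas of the language `L^m` (negation normal form), with agents `Fin m`
and propositional variables indexed by `ℕ`. -/
inductive Fml (m : ℕ) : Type
  | pos : ℕ → Fml m                  -- p
  | neg : ℕ → Fml m                  -- p̄
  | and : Fml m → Fml m → Fml m      -- φ ∧ ψ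
  | or  : Fml m → Fml m → Fml m      -- φ ∨ ψ
  | box : Fml m → Fml m              -- □φ
  | dia : Fml m → Fml m              -- ◇φ
  | ag  : Fin m → Fml m → Fml m      -- [i]φ
  | dag : Fin m → Fml m → Fml m      -- ⟨i⟩φ

namespace Fml

/-- Negation `φ̄`: replace every connective/modality by its dual and swap `p` with `p̄`. -/
def negF {m : ℕ} : Fml m → Fml m
  | pos p => neg p
  | neg p => pos p
  | and φ ψ => or φ.negF ψ.negF
  | or φ ψ => and φ.negF ψ.negF
  | box φ => dia φ.negF
  | dia φ => box φ.negF
  | ag i φ => dag i φ.negF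
  | dag i φ => ag i φ.negF

/-- `φ → ψ` abbreviates `φ̄ ∨ ψ`. -/
def impF {m : ℕ} (φ ψ : Fml m) : Fml m := or φ.negF ψ

end Fml

/-- `f 0 ∧ f 1 ∧ ⋯ ∧ f k` (left-associated). -/
def conjUpTo {m : ℕ} (f : ℕ → Fml m) : ℕ → Fml m
  | 0 => f 0
  | k+1 => Fml.and (conjUpTo f k) (f (k+1))

/-- `f 0 ∨ f 1 ∨ ⋯ ∨ f k` (left-associated). -/
def disjUpTo {m : ℕ} (f : ℕ → Fml m) : ℕ → Fml m
  | 0 => f 0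
  | k+1 => Fml.or (disjUpTo f k) (f (k+1))

/-- `(f 0)̄ ∧ ((f 1)̄ ∧ ⋯ ((f (j-1))̄ ∧ base))`. -/
def prefNegConj {m : ℕ} (f : ℕ → Fml m) : ℕ → Fml m → Fml m
  | 0, base => base
  | j+1, base => prefNegConj f j (Fml.and (f j).negF base)

/-- The antecedent `◇[i]φ_0 ∧ ◇(φ̄_0 ∧ [i]φ_1) ∧ ⋯ ∧ ◇(φ̄_0 ∧ ⋯ ∧ φ̄_{n'-1} ∧ [i]φ_{n'})`
of the (n'+1)-choice axiom. -/
def apcAnte {m : ℕ} (i : Fin m) (f : ℕ → Fml m) (n' : ℕ) : Fml m :=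
  conjUpTo (fun j => Fml.dia (prefNegConj f j (Fml.ag i (f j)))) n'

/-- The n-choice axiom `APC_n^i` for `n = n' + 1` choices `φ_0, …, φ_{n'}`. -/
def apcAx {m : ℕ} (i : Fin m) (f : ℕ → Fml m) (n' : ℕ) : Fml m :=
  (apcAnte i f n').impF (disjUpTo f n')

def diaAgIdx {m : ℕ} (f : Fin m → Fml m) (j : ℕ) : Fml m :=
  if h : j < m then Fml.dia (Fml.ag ⟨j, h⟩ (f ⟨j, h⟩)) else Fml.pos 0

def agIdx {m : ℕ} (f : Fin m → Fml m) (j : ℕ) : Fml m :=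
  if h : j < m then Fml.ag ⟨j, h⟩ (f ⟨j, h⟩) else Fml.pos 0

/-- The independence-of-agents axiom `⋀_{i∈Ag} ◇[i]φ_i → ◇(⋀_{i∈Ag} [i]φ_i)`
(for `m ≥ 1` agents). -/
def ioaAx {m : ℕ} (f : Fin m → Fml m) : Fml m :=
  (conjUpTo (diaAgIdx f) (m-1)).impF (Fml.dia (conjUpTo (agIdx f) (m-1)))

/-- An `Ldm_n^m`-model on the carrier `W`: each `rel i` is an equivalence relation (C1),
independence of agents (C2), the `n`-choice condition when `n > 0` (C3), plus a valuation. -/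
structure ModelOn (n m : ℕ) (W : Type) : Type where
  nonemp : Nonempty W
  rel : Fin m → W → W → Prop
  refl : ∀ i w, rel i w w
  symm : ∀ i w u, rel i w u → rel i u w
  trans : ∀ i w u v, rel i w u → rel i u v → rel i w v
  ioa : ∀ u : Fin m → W, ∃ v, ∀ i, rel i (u i) v
  apc : 0 < n → ∀ (i : Fin m) (w : Fin (n+1) → W),
      ∃ k j : Fin (n+1), k < j ∧ rel i (w k) (w j)
  val : ℕ → Set W

/-- Satisfaction `M, w ⊩ φ`. -/
def Sat {n m : ℕ} {W : Type} (M : ModelOn n m W) : W → Fml m → Prop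
  | w, .pos p => w ∈ M.val p
  | w, .neg p => w ∉ M.val p
  | w, .and φ ψ => Sat M w φ ∧ Sat M w ψ
  | w, .or φ ψ => Sat M w φ ∨ Sat M w ψ
  | _, .box φ => ∀ u, Sat M u φ
  | _, .dia φ => ∃ u, Sat M u φ
  | w, .ag i φ => ∀ u, M.rel i w u → Sat M u φ
  | w, .dag i φ => ∃ u, M.rel i w u ∧ Sat M u φ

/-- Validity: `⊩ φ`. -/
def Valid (n m : ℕ) (φ : Fml m) : Prop :=
  ∀ (W : Type) (M : ModelOn n m W) (w : W), Sat M w φ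

/-- Semantic consequence `Γ ⊩ φ`. -/
def SemConseq (n m : ℕ) (Γ : Set (Fml m)) (φ : Fml m) : Prop :=
  ∀ (W : Type) (M : ModelOn n m W) (w : W), (∀ ψ ∈ Γ, Sat M w ψ) → Sat M w φ

/-- The Hilbert calculus `Ldm_n^m`: classical propositional logic, S5 for `□` and each
`[i]`, the bridge axiom, IOA, the n-choice axioms (for `n > 0`), with modus ponens and
necessitation (applied to theorems). `Hderiv n m Γ φ` is `Γ ⊢_{Ldm_n^m} φ`. -/
inductive Hderiv (n m : ℕ) : Set (Fml m) → Fml m → Prop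
  | prem {Γ} {φ} (h : φ ∈ Γ) : Hderiv n m Γ φ
  | ax1 {Γ} (φ ψ : Fml m) : Hderiv n m Γ (φ.impF (ψ.impF φ))
  | ax2 {Γ} (φ ψ χ : Fml m) :
      Hderiv n m Γ ((φ.impF (ψ.impF χ)).impF ((φ.impF ψ).impF (φ.impF χ)))
  | ax3 {Γ} (φ ψ : Fml m) :
      Hderiv n m Γ ((ψ.negF.impF φ.negF).impF (φ.impF ψ))
  | boxK {Γ} (φ ψ : Fml m) :
      Hderiv n m Γ ((Fml.box (φ.impF ψ)).impF ((Fml.box φ).impF (Fml.box ψ)))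
  | boxT {Γ} (φ : Fml m) : Hderiv n m Γ ((Fml.box φ).impF φ)
  | box5 {Γ} (φ : Fml m) : Hderiv n m Γ ((Fml.dia φ).impF (Fml.box (Fml.dia φ)))
  | boxDual {Γ} (φ : Fml m) : Hderiv n m Γ (Fml.or (Fml.box φ) (Fml.dia φ.negF))
  | agK {Γ} (i : Fin m) (φ ψ : Fml m) :
      Hderiv n m Γ ((Fml.ag i (φ.impF ψ)).impF ((Fml.ag i φ).impF (Fml.ag i ψ)))
  | agT {Γ} (i : Fin m) (φ : Fml m) : Hderiv n m Γ ((Fml.ag i φ).impF φ)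
  | ag5 {Γ} (i : Fin m) (φ : Fml m) :
      Hderiv n m Γ ((Fml.dag i φ).impF (Fml.ag i (Fml.dag i φ)))
  | agDual {Γ} (i : Fin m) (φ : Fml m) :
      Hderiv n m Γ (Fml.or (Fml.ag i φ) (Fml.dag i φ.negF))
  | bridge {Γ} (i : Fin m) (φ : Fml m) :
      Hderiv n m Γ ((Fml.box φ).impF (Fml.ag i φ))
  | ioa {Γ} (f : Fin m → Fml m) : Hderiv n m Γ (ioaAx f)
  | apc {Γ} (hn : 0 < n) (i : Fin m) (f : ℕ → Fml m) :
      Hderiv n m Γ (apcAx i f (n-1))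
  | mp {Γ} {φ ψ} : Hderiv n m Γ (φ.impF ψ) → Hderiv n m Γ φ → Hderiv n m Γ ψ
  | nec {Γ} {φ} : Hderiv n m ∅ φ → Hderiv n m Γ (Fml.box φ)

/-- A relational atom `R_i x y`. -/
abbrev RAtom (m : ℕ) : Type := Fin m × ℕ × ℕ
/-- The relational part of a labelled sequent: a multiset of relational atoms. -/
abbrev RAtoms (m : ℕ) : Type := Multiset (RAtom m)
/-- A labelled formula `x : φ`. -/
abbrev LFml (m : ℕ) : Type := ℕ × Fml m
/-- The formula part of a labelled sequent: a multiset of labelled formulas. -/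
abbrev LFmls (m : ℕ) : Type := Multiset (LFml m)

/-- The label `v` does not occur in the labelled sequent `R, Γ` (eigenvariable condition). -/
def freshIn {m : ℕ} (v : ℕ) (R : RAtoms m) (Γ : LFmls m) : Prop :=
  (∀ a ∈ R, a.2.1 ≠ v ∧ a.2.2 ≠ v) ∧ ∀ e ∈ Γ, e.1 ≠ v

/-- `Reach R i w u`: `u` is `i`-reachable from `w`, i.e. there is a (possibly empty)
path of `R_i`-atoms of `R` (traversed in either direction) connecting `w` to `u`. -/
inductive Reach {m : ℕ} (R : RAtoms m) (i : Fin m) : ℕ → ℕ → Prop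
  | refl (w : ℕ) : Reach R i w w
  | fwd {w u v : ℕ} : Reach R i w u → ((i, u, v) : RAtom m) ∈ R → Reach R i w v
  | bwd {w u v : ℕ} : Reach R i w u → ((i, v, u) : RAtom m) ∈ R → Reach R i w v

/-- The relational atoms `R_1 u_1 v, …, R_m u_m v` used by the rule (IOA). -/
def ioaAtoms {m : ℕ} (u : Fin m → ℕ) (v : ℕ) : RAtoms m :=
  Multiset.ofList ((List.finRange m).map fun i => ((i, u i, v) : RAtom m))

/-- Which optional rules are present in a labelled calculus, and whether the
`[i]`-rule keeps its principal formula in the premise. -/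
structure Flags : Type where
  refl : Bool    -- (refl_i)
  eucl : Bool    -- (eucl_i)
  diaAg : Bool   -- (⟨i⟩)
  pr : Bool      -- (Pr_i)
  ioa : Bool     -- (IOA)
  agKeep : Bool  -- premise of ([i]) keeps w:[i]φ

/-- `SeqH fl n m h R Γ`: the labelled sequent `R, Γ` has a derivation of height at most
`h` in the labelled calculus determined by `fl` (with parameters `n`, `m`). -/
inductive SeqH (fl : Flags) (n m : ℕ) : ℕ → RAtoms m → LFmls m → Prop
  | id {h : ℕ} {R : RAtoms m} {Γ : LFmls m} (w p : ℕ) :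
      SeqH fl n m h R ((w, Fml.pos p) ::ₘ (w, Fml.neg p) ::ₘ Γ)
  | andR {h R Γ} {w : ℕ} {φ ψ : Fml m} :
      SeqH fl n m h R ((w, Fml.and φ ψ) ::ₘ (w, φ) ::ₘ Γ) →
      SeqH fl n m h R ((w, Fml.and φ ψ) ::ₘ (w, ψ) ::ₘ Γ) →
      SeqH fl n m (h+1) R ((w, Fml.and φ ψ) ::ₘ Γ)
  | orR {h R Γ} {w : ℕ} {φ ψ : Fml m} :
      SeqH fl n m h R ((w, Fml.or φ ψ) ::ₘ (w, φ) ::ₘ (w, ψ) ::ₘ Γ) →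
      SeqH fl n m (h+1) R ((w, Fml.or φ ψ) ::ₘ Γ)
  | boxR {h R Γ} {w v : ℕ} {φ : Fml m}
      (hv : freshIn v R ((w, Fml.box φ) ::ₘ Γ)) :
      SeqH fl n m h R ((w, Fml.box φ) ::ₘ (v, φ) ::ₘ Γ) →
      SeqH fl n m (h+1) R ((w, Fml.box φ) ::ₘ Γ)
  | diaR {h R Γ} {w u : ℕ} {φ : Fml m} :
      SeqH fl n m h R ((w, Fml.dia φ) ::ₘ (u, φ) ::ₘ Γ) →
      SeqH fl n m (h+1) R ((w, Fml.dia φ) ::ₘ Γ)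
  | agR {h R Γ} {w v : ℕ} {i : Fin m} {φ : Fml m} (hfl : fl.agKeep = false)
      (hv : freshIn v R ((w, Fml.ag i φ) ::ₘ Γ)) :
      SeqH fl n m h (((i, w, v) : RAtom m) ::ₘ R) ((v, φ) ::ₘ Γ) →
      SeqH fl n m (h+1) R ((w, Fml.ag i φ) ::ₘ Γ)
  | agRKeep {h R Γ} {w v : ℕ} {i : Fin m} {φ : Fml m} (hfl : fl.agKeep = true)
      (hv : freshIn v R ((w, Fml.ag i φ) ::ₘ Γ)) :
      SeqH fl n m h (((i, w, v) : RAtom m) ::ₘ R) ((w, Fml.ag i φ) ::ₘ (v, φ) ::ₘ Γ) →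
      SeqH fl n m (h+1) R ((w, Fml.ag i φ) ::ₘ Γ)
  | dagR {h R Γ} {w u : ℕ} {i : Fin m} {φ : Fml m} (hfl : fl.diaAg = true) :
      SeqH fl n m h (((i, w, u) : RAtom m) ::ₘ R) ((w, Fml.dag i φ) ::ₘ (u, φ) ::ₘ Γ) →
      SeqH fl n m (h+1) (((i, w, u) : RAtom m) ::ₘ R) ((w, Fml.dag i φ) ::ₘ Γ)
  | reflR {h R Γ} {i : Fin m} {w : ℕ} (hfl : fl.refl = true) :
      SeqH fl n m h (((i, w, w) : RAtom m) ::ₘ R) Γ →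
      SeqH fl n m (h+1) R Γ
  | euclR {h R Γ} {i : Fin m} {w u v : ℕ} (hfl : fl.eucl = true) :
      SeqH fl n m h (((i, w, u) : RAtom m) ::ₘ ((i, w, v) : RAtom m) ::ₘ
        ((i, u, v) : RAtom m) ::ₘ R) Γ →
      SeqH fl n m (h+1) (((i, w, u) : RAtom m) ::ₘ ((i, w, v) : RAtom m) ::ₘ R) Γ
  | ioaR {h R Γ} (hfl : fl.ioa = true) (u : Fin m → ℕ) (v : ℕ) (hv : freshIn v R Γ) :
      SeqH fl n m h (ioaAtoms u v + R) Γ →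
      SeqH fl n m (h+1) R Γ
  | apcR {h R Γ} (hn : 0 < n) (i : Fin m) (w : Fin (n+1) → ℕ) :
      (∀ k j : Fin (n+1), k < j → SeqH fl n m h (((i, w k, w j) : RAtom m) ::ₘ R) Γ) →
      SeqH fl n m (h+1) R Γ
  | prR {h R Γ} {w u : ℕ} {i : Fin m} {φ : Fml m} (hfl : fl.pr = true)
      (hreach : Reach R i w u) :
      SeqH fl n m h R ((w, Fml.dag i φ) ::ₘ (u, φ) ::ₘ Γ) →
      SeqH fl n m (h+1) R ((w, Fml.dag i φ) ::ₘ Γ)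

/-- Derivability (of some height) in the labelled calculus determined by `fl`. -/
def Seq (fl : Flags) (n m : ℕ) (R : RAtoms m) (Γ : LFmls m) : Prop :=
  ∃ h, SeqH fl n m h R Γ

/-- The calculus `G3Ldm_n^m`. -/
def G3flags : Flags := ⟨true, true, true, false, true, false⟩
/-- The calculus `G3Ldm_n^m + PR`. -/
def G3PRflags : Flags := ⟨true, true, true, true, true, false⟩
/-- `G3Ldm_n^m + PR` without the rules `(refl_i)`. -/
def G3PRnoReflFlags : Flags := ⟨false, true, true, true, true, false⟩
/-- `G3Ldm_n^m + PR` without the rules `(eucl_i)`. -/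
def G3PRnoEuclFlags : Flags := ⟨true, false, true, true, true, false⟩
/-- The refined calculus `Ldm_n^m L`. -/
def LdmLflags : Flags := ⟨false, false, false, true, true, true⟩
/-- The refined single-agent calculus `Ldm_n^1 L` (no (IOA)). -/
def LdmL1flags : Flags := ⟨false, false, false, true, false, true⟩

/-- Substitution of the label `y` for the label `x`. -/
def substLab (x y v : ℕ) : ℕ := if v = x then y else v

def substR {m : ℕ} (x y : ℕ) (R : RAtoms m) : RAtoms m :=
  R.map fun a => (a.1, substLab x y a.2.1, substLab x y a.2.2)

def substF {m : ℕ} (x y : ℕ) (Γ : LFmls m) : LFmls m :=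
  Γ.map fun e => (substLab x y e.1, e.2)

/-- Height-preserving invertibility of every inference rule of the calculus given by `fl`. -/
def InvertAll (fl : Flags) (n m : ℕ) : Prop :=
  (∀ h R Γ (w : ℕ) (φ ψ : Fml m), SeqH fl n m h R ((w, Fml.and φ ψ) ::ₘ Γ) →
     SeqH fl n m h R ((w, Fml.and φ ψ) ::ₘ (w, φ) ::ₘ Γ) ∧
     SeqH fl n m h R ((w, Fml.and φ ψ) ::ₘ (w, ψ) ::ₘ Γ)) ∧
  (∀ h R Γ (w : ℕ) (φ ψ : Fml m), SeqH fl n m h R ((w, Fml.or φ ψ) ::ₘ Γ) →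
     SeqH fl n m h R ((w, Fml.or φ ψ) ::ₘ (w, φ) ::ₘ (w, ψ) ::ₘ Γ)) ∧
  (∀ h R Γ (w v : ℕ) (φ : Fml m), freshIn v R ((w, Fml.box φ) ::ₘ Γ) →
     SeqH fl n m h R ((w, Fml.box φ) ::ₘ Γ) →
     SeqH fl n m h R ((w, Fml.box φ) ::ₘ (v, φ) ::ₘ Γ)) ∧
  (∀ h R Γ (w u : ℕ) (φ : Fml m), SeqH fl n m h R ((w, Fml.dia φ) ::ₘ Γ) →
     SeqH fl n m h R ((w, Fml.dia φ) ::ₘ (u, φ) ::ₘ Γ)) ∧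
  (fl.agKeep = false → ∀ h R Γ (w v : ℕ) (i : Fin m) (φ : Fml m),
     freshIn v R ((w, Fml.ag i φ) ::ₘ Γ) →
     SeqH fl n m h R ((w, Fml.ag i φ) ::ₘ Γ) →
     SeqH fl n m h (((i, w, v) : RAtom m) ::ₘ R) ((v, φ) ::ₘ Γ)) ∧
  (fl.agKeep = true → ∀ h R Γ (w v : ℕ) (i : Fin m) (φ : Fml m),
     freshIn v R ((w, Fml.ag i φ) ::ₘ Γ) →
     SeqH fl n m h R ((w, Fml.ag i φ) ::ₘ Γ) →
     SeqH fl n m h (((i, w, v) : RAtom m) ::ₘ R) ((w, Fml.ag i φ) ::ₘ (v, φ) ::ₘ Γ)) ∧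
  (fl.diaAg = true → ∀ h R Γ (w u : ℕ) (i : Fin m) (φ : Fml m),
     SeqH fl n m h (((i, w, u) : RAtom m) ::ₘ R) ((w, Fml.dag i φ) ::ₘ Γ) →
     SeqH fl n m h (((i, w, u) : RAtom m) ::ₘ R) ((w, Fml.dag i φ) ::ₘ (u, φ) ::ₘ Γ)) ∧
  (fl.refl = true → ∀ h R Γ (i : Fin m) (w : ℕ), SeqH fl n m h R Γ →
     SeqH fl n m h (((i, w, w) : RAtom m) ::ₘ R) Γ) ∧
  (fl.eucl = true → ∀ h R Γ (i : Fin m) (w u v : ℕ),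
     SeqH fl n m h (((i, w, u) : RAtom m) ::ₘ ((i, w, v) : RAtom m) ::ₘ R) Γ →
     SeqH fl n m h (((i, w, u) : RAtom m) ::ₘ ((i, w, v) : RAtom m) ::ₘ
       ((i, u, v) : RAtom m) ::ₘ R) Γ) ∧
  (fl.ioa = true → ∀ h R Γ (u : Fin m → ℕ) (v : ℕ), freshIn v R Γ →
     SeqH fl n m h R Γ → SeqH fl n m h (ioaAtoms u v + R) Γ) ∧
  (0 < n → ∀ h R Γ (i : Fin m) (w : Fin (n+1) → ℕ) (k j : Fin (n+1)), k < j →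
     SeqH fl n m h R Γ → SeqH fl n m h (((i, w k, w j) : RAtom m) ::ₘ R) Γ) ∧
  (fl.pr = true → ∀ h R Γ (w u : ℕ) (i : Fin m) (φ : Fml m), Reach R i w u →
     SeqH fl n m h R ((w, Fml.dag i φ) ::ₘ Γ) →
     SeqH fl n m h R ((w, Fml.dag i φ) ::ₘ (u, φ) ::ₘ Γ))

/-- A labelled sequent `R, Γ` is satisfied in `M` under the interpretation `I`. -/
def SeqSat {n m : ℕ} {W : Type} (M : ModelOn n m W) (I : ℕ → W)
    (R : RAtoms m) (Γ : LFmls m) : Prop :=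
  (∀ a ∈ R, M.rel a.1 (I a.2.1) (I a.2.2)) → ∃ e ∈ Γ, Sat M (I e.1) e.2

/-- A labelled sequent is valid: satisfied in every model under every interpretation. -/
def SeqValid (n m : ℕ) (R : RAtoms m) (Γ : LFmls m) : Prop :=
  ∀ (W : Type) (M : ModelOn n m W) (I : ℕ → W), SeqSat M I R Γ

open Classical

theorem Fml.negF_negF {m} (φ : Fml m) : φ.negF.negF = φ := by
  induction φ <;> simp [Fml.negF, *]

theorem sat_negF {n m : ℕ} {W : Type} (M : ModelOn n m W) (φ : Fml m) (w : W) :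
    Sat M w φ.negF ↔ ¬ Sat M w φ := by
  induction φ generalizing w <;>
    simp_all [Fml.negF, Sat, not_forall, not_and, not_exists] <;> tauto

/-- satisfaction only depends on the value of I at the label -/
theorem seqsat_aux {n m : ℕ} {W : Type} (M : ModelOn n m W) :
    ∀ (I I' : ℕ → W) (e : LFml m), I e.1 = I' e.1 → (Sat M (I e.1) e.2 ↔ Sat M (I' e.1) e.2) := by
  intro I I' e h; rw [h]

theorem reach_sound {n m : ℕ} {W : Type} (M : ModelOn n m W) (I : ℕ → W)
    {R : RAtoms m} {i : Fin m} {w u : ℕ}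
    (hR : ∀ a ∈ R, M.rel a.1 (I a.2.1) (I a.2.2)) (h : Reach R i w u) :
    M.rel i (I w) (I u) := by
  induction h with
  | refl => exact M.refl i _
  | fwd h1 h2 ih => exact M.trans i _ _ _ ih (hR _ h2)
  | bwd h1 h2 ih => exact M.trans i _ _ _ ih (M.symm i _ _ (hR _ h2))

theorem seqH_sound {fl : Flags} {n m : ℕ} {h : ℕ} {R : RAtoms m} {Γ : LFmls m}
    (d : SeqH fl n m h R Γ) : SeqValid n m R Γ := by
  induction d with
  | @id h R Γ w p =>
    intro W M I hR
    by_cases hp : I w ∈ M.val p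
    · exact ⟨(w, Fml.pos p), by simp, hp⟩
    · exact ⟨(w, Fml.neg p), by simp, hp⟩
  | @andR h R Γ w φ ψ d1 d2 ih1 ih2 =>
    intro W M I hR
    obtain ⟨e1, he1, hs1⟩ := ih1 W M I hR
    simp only [Multiset.mem_cons] at he1
    rcases he1 with h1 | h1 | h1
    · exact ⟨e1, by simp [h1], hs1⟩
    · obtain ⟨e2, he2, hs2⟩ := ih2 W M I hR
      simp only [Multiset.mem_cons] at he2
      rcases he2 with h2 | h2 | h2
      · exact ⟨e2, by simp [h2], hs2⟩
      · subst h1 h2; exact ⟨(w, Fml.and φ ψ), by simp, hs1, hs2⟩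
      · exact ⟨e2, by simp [h2], hs2⟩
    · exact ⟨e1, by simp [h1], hs1⟩
  | @orR h R Γ w φ ψ d1 ih =>
    intro W M I hR
    obtain ⟨e1, he1, hs1⟩ := ih W M I hR
    simp only [Multiset.mem_cons] at he1
    rcases he1 with h1 | h1 | h1 | h1
    · exact ⟨e1, by simp [h1], hs1⟩
    · subst h1; exact ⟨(w, Fml.or φ ψ), by simp, Or.inl hs1⟩
    · subst h1; exact ⟨(w, Fml.or φ ψ), by simp, Or.inr hs1⟩
    · exact ⟨e1, by simp [h1], hs1⟩
  | @boxR h R Γ w v φ hv d ih =>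
    intro W M I hR
    by_contra hno
    push_neg at hno
    have hbox : ¬ Sat M (I w) (Fml.box φ) := hno (w, Fml.box φ) (by simp)
    simp only [Sat, not_forall] at hbox
    obtain ⟨u0, hu0⟩ := hbox
    set I' := Function.update I v u0 with hI'
    have hRv : ∀ a ∈ R, M.rel a.1 (I' a.2.1) (I' a.2.2) := by
      intro a ha
      have := hv.1 a ha
      simp [hI', Function.update_of_ne this.1, Function.update_of_ne this.2]
      exact hR a ha
    obtain ⟨e, he, hs⟩ := ih W M I' hRv
    simp only [Multiset.mem_cons] at he
    have hwv : w ≠ v := hv.2 (w, Fml.box φ) (by simp)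
    rcases he with h1 | h1 | h1
    · subst h1; simp only at hs
      rw [hI', Function.update_of_ne hwv] at hs
      exact hno (w, Fml.box φ) (by simp) hs
    · subst h1; simp only at hs
      rw [hI', Function.update_self] at hs
      exact hu0 hs
    · have : e.1 ≠ v := hv.2 e (by simp [h1])
      rw [hI', Function.update_of_ne this] at hs
      exact hno e (by simp [h1]) hs
  | @diaR h R Γ w u φ d ih =>
    intro W M I hR
    obtain ⟨e, he, hs⟩ := ih W M I hR
    simp only [Multiset.mem_cons] at he
    rcases he with h1 | h1 | h1
    · exact ⟨e, by simp [h1], hs⟩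
    · subst h1; exact ⟨(w, Fml.dia φ), by simp, ⟨I u, hs⟩⟩
    · exact ⟨e, by simp [h1], hs⟩
  | @agR h R Γ w v i φ hfl hv d ih =>
    intro W M I hR
    by_contra hno
    push_neg at hno
    have hag : ¬ Sat M (I w) (Fml.ag i φ) := hno (w, Fml.ag i φ) (by simp)
    simp only [Sat, not_forall] at hag
    obtain ⟨u0, hu0, hu0'⟩ := hag
    set I' := Function.update I v u0 with hI'
    have hwv : w ≠ v := hv.2 (w, Fml.ag i φ) (by simp)
    have hRv : ∀ a ∈ (((i, w, v) : RAtom m) ::ₘ R), M.rel a.1 (I' a.2.1) (I' a.2.2) := by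
      intro a ha
      simp only [Multiset.mem_cons] at ha
      rcases ha with h1 | h1
      · subst h1
        simp [hI', Function.update_of_ne hwv, Function.update_self]
        exact hu0
      · have := hv.1 a h1
        simp [hI', Function.update_of_ne this.1, Function.update_of_ne this.2]
        exact hR a h1
    obtain ⟨e, he, hs⟩ := ih W M I' hRv
    simp only [Multiset.mem_cons] at he
    rcases he with h1 | h1
    · subst h1; simp only at hs
      rw [hI', Function.update_self] at hs
      exact hu0' hs
    · have : e.1 ≠ v := hv.2 e (by simp [h1])
      rw [hI', Function.update_of_ne this] at hs
      exact hno e (by simp [h1]) hs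
  | @agRKeep h R Γ w v i φ hfl hv d ih =>
    intro W M I hR
    by_contra hno
    push_neg at hno
    have hag : ¬ Sat M (I w) (Fml.ag i φ) := hno (w, Fml.ag i φ) (by simp)
    simp only [Sat, not_forall] at hag
    obtain ⟨u0, hu0, hu0'⟩ := hag
    set I' := Function.update I v u0 with hI'
    have hwv : w ≠ v := hv.2 (w, Fml.ag i φ) (by simp)
    have hRv : ∀ a ∈ (((i, w, v) : RAtom m) ::ₘ R), M.rel a.1 (I' a.2.1) (I' a.2.2) := by
      intro a ha
      simp only [Multiset.mem_cons] at ha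
      rcases ha with h1 | h1
      · subst h1
        simp [hI', Function.update_of_ne hwv, Function.update_self]
        exact hu0
      · have := hv.1 a h1
        simp [hI', Function.update_of_ne this.1, Function.update_of_ne this.2]
        exact hR a h1
    obtain ⟨e, he, hs⟩ := ih W M I' hRv
    simp only [Multiset.mem_cons] at he
    rcases he with h1 | h1 | h1
    · subst h1; simp only at hs
      rw [hI', Function.update_of_ne hwv] at hs
      exact hno (w, Fml.ag i φ) (by simp) hs
    · subst h1; simp only at hs
      rw [hI', Function.update_self] at hs
      exact hu0' hs
    · have : e.1 ≠ v := hv.2 e (by simp [h1])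
      rw [hI', Function.update_of_ne this] at hs
      exact hno e (by simp [h1]) hs
  | @dagR h R Γ w u i φ hfl d ih =>
    intro W M I hR
    have hrel : M.rel i (I w) (I u) := hR ((i, w, u)) (by simp)
    obtain ⟨e, he, hs⟩ := ih W M I hR
    simp only [Multiset.mem_cons] at he
    rcases he with h1 | h1 | h1
    · exact ⟨e, by simp [h1], hs⟩
    · subst h1; exact ⟨(w, Fml.dag i φ), by simp, ⟨I u, hrel, hs⟩⟩
    · exact ⟨e, by simp [h1], hs⟩
  | @reflR h R Γ i w hfl d ih =>
    intro W M I hR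
    refine ih W M I ?_
    intro a ha
    simp only [Multiset.mem_cons] at ha
    rcases ha with h1 | h1
    · subst h1; exact M.refl i _
    · exact hR a h1
  | @euclR h R Γ i w u v hfl d ih =>
    intro W M I hR
    have h1 : M.rel i (I w) (I u) := hR ((i, w, u)) (by simp)
    have h2 : M.rel i (I w) (I v) := hR ((i, w, v)) (by simp)
    refine ih W M I ?_
    intro a ha
    simp only [Multiset.mem_cons] at ha
    rcases ha with h3 | h3 | h3 | h3
    · subst h3; exact h1
    · subst h3; exact h2
    · subst h3; exact M.trans i _ _ _ (M.symm i _ _ h1) h2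
    · exact hR a (by simp [h3])
  | @ioaR h R Γ hfl u v hv d ih =>
    intro W M I hR
    obtain ⟨v0, hv0⟩ := M.ioa (fun i => if u i = v then I v else I (u i))
    -- we will take I' v := v0
    set I' := Function.update I v v0 with hI'
    have key : ∀ i : Fin m, M.rel i (I' (u i)) (I' v) := by
      intro i
      by_cases hui : u i = v
      · rw [hui]
        simp only [hI', Function.update_self]
        exact M.refl i _
      · simp only [hI', Function.update_of_ne hui, Function.update_self]
        have := hv0 i
        rw [if_neg hui] at this
        exact this
    have hRv : ∀ a ∈ (ioaAtoms u v + R), M.rel a.1 (I' a.2.1) (I' a.2.2) := by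
      intro a ha
      rw [Multiset.mem_add] at ha
      rcases ha with h1 | h1
      · simp only [ioaAtoms, Multiset.mem_coe, List.mem_map, List.mem_finRange] at h1
        obtain ⟨i, _, rfl⟩ := h1
        exact key i
      · have := hv.1 a h1
        simp only [hI', Function.update_of_ne this.1, Function.update_of_ne this.2]
        exact hR a h1
    obtain ⟨e, he, hs⟩ := ih W M I' hRv
    refine ⟨e, he, ?_⟩
    have : e.1 ≠ v := hv.2 e he
    rw [hI'] at hs
    rwa [Function.update_of_ne this] at hs
  | @apcR h R Γ hn i w prem ih =>
    intro W M I hR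
    obtain ⟨k, j, hkj, hrel⟩ := M.apc hn i (fun k => I (w k))
    refine ih k j hkj W M I ?_
    intro a ha
    simp only [Multiset.mem_cons] at ha
    rcases ha with h1 | h1
    · subst h1; exact hrel
    · exact hR a h1
  | @prR h R Γ w u i φ hfl hreach d ih =>
    intro W M I hR
    have hrel : M.rel i (I w) (I u) := reach_sound M I hR hreach
    obtain ⟨e, he, hs⟩ := ih W M I hR
    simp only [Multiset.mem_cons] at he
    rcases he with h1 | h1 | h1
    · exact ⟨e, by simp [h1], hs⟩
    · subst h1; exact ⟨(w, Fml.dag i φ), by simp, ⟨I u, hrel, hs⟩⟩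
    · exact ⟨e, by simp [h1], hs⟩

theorem seq_sound {fl : Flags} {n m : ℕ} {φ : Fml m} {w : ℕ}
    (d : Seq fl n m 0 {(w, φ)}) : Valid n m φ := by
  intro W M w0
  obtain ⟨h, d⟩ := d
  obtain ⟨e, he, hs⟩ := seqH_sound d W M (fun _ => w0) (by intro a ha; exact absurd ha (Multiset.notMem_zero a))
  have : e = (w, φ) := by simpa using he
  subst this
  exact hs


open Classical

theorem sat_impF {n m : ℕ} {W : Type} (M : ModelOn n m W) (φ ψ : Fml m) (w : W) :
    Sat M w (φ.impF ψ) ↔ (Sat M w φ → Sat M w ψ) := by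
  simp only [Fml.impF, Sat, sat_negF]; tauto

theorem sat_conjUpTo {n m : ℕ} {W : Type} (M : ModelOn n m W) (f : ℕ → Fml m) (k : ℕ) (w : W) :
    Sat M w (conjUpTo f k) ↔ ∀ j ≤ k, Sat M w (f j) := by
  induction k with
  | zero => simp [conjUpTo]
  | succ k ih =>
    simp only [conjUpTo, Sat, ih]
    constructor
    · rintro ⟨h1, h2⟩ j hj
      by_cases hjk : j = k + 1
      · exact hjk ▸ h2
      · exact h1 j (by omega)
    · intro h
      exact ⟨fun j hj => h j (Nat.le_succ_of_le hj), h _ le_rfl⟩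

theorem sat_disjUpTo {n m : ℕ} {W : Type} (M : ModelOn n m W) (f : ℕ → Fml m) (k : ℕ) (w : W) :
    Sat M w (disjUpTo f k) ↔ ∃ j ≤ k, Sat M w (f j) := by
  induction k with
  | zero => simp [disjUpTo]
  | succ k ih =>
    simp only [disjUpTo, Sat, ih]
    constructor
    · rintro (⟨j, hj, h⟩ | h)
      · exact ⟨j, Nat.le_succ_of_le hj, h⟩
      · exact ⟨k+1, le_rfl, h⟩
    · rintro ⟨j, hj, h⟩
      by_cases hjk : j = k + 1
      · exact Or.inr (hjk ▸ h)
      · exact Or.inl ⟨j, by omega, h⟩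

theorem sat_prefNegConj {n m : ℕ} {W : Type} (M : ModelOn n m W) (f : ℕ → Fml m) (j : ℕ)
    (base : Fml m) (w : W) :
    Sat M w (prefNegConj f j base) ↔ ((∀ l < j, ¬ Sat M w (f l)) ∧ Sat M w base) := by
  induction j generalizing base with
  | zero => simp [prefNegConj]
  | succ j ih =>
    simp only [prefNegConj, ih, Sat, sat_negF]
    constructor
    · rintro ⟨h1, h2, h3⟩
      refine ⟨fun l hl => ?_, h3⟩
      rcases Nat.lt_succ_iff_lt_or_eq.mp hl with h | h
      · exact h1 l h
      · exact h ▸ h2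
    · rintro ⟨h1, h2⟩
      exact ⟨fun l hl => h1 l (Nat.lt_succ_of_lt hl), h1 j (Nat.lt_succ_self j), h2⟩

theorem valid_ioaAx {n m : ℕ} (hm : 0 < m) (f : Fin m → Fml m) : Valid n m (ioaAx f) := by
  intro W M w
  rw [ioaAx, sat_impF]
  intro hante
  rw [sat_conjUpTo] at hante
  have key : ∀ i : Fin m, ∃ u : W, Sat M u (Fml.ag i (f i)) := by
    intro i
    have hi : i.val ≤ m - 1 := Nat.le_sub_one_of_lt i.isLt
    have := hante i.val hi
    rw [diaAgIdx, dif_pos i.isLt] at this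
    simpa [Sat] using this
  choose u hu using key
  obtain ⟨v, hv⟩ := M.ioa u
  show ∃ z, Sat M z (conjUpTo (agIdx f) (m-1))
  refine ⟨v, ?_⟩
  rw [sat_conjUpTo]
  intro j hj
  have hjm : j < m := Nat.lt_of_le_of_lt hj (Nat.sub_lt hm Nat.one_pos)
  rw [agIdx, dif_pos hjm]
  intro z hz
  exact hu ⟨j, hjm⟩ z (M.trans _ _ _ _ (hv ⟨j, hjm⟩) hz)

theorem valid_apcAx {n m : ℕ} (hn : 0 < n) (i : Fin m) (f : ℕ → Fml m) :
    Valid n m (apcAx i f (n-1)) := by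
  intro W M w
  rw [apcAx, sat_impF]
  intro hante
  rw [apcAnte, sat_conjUpTo] at hante
  have key : ∀ j ≤ n - 1, ∃ u : W, (∀ l < j, ¬ Sat M u (f l)) ∧ Sat M u (Fml.ag i (f j)) := by
    intro j hj
    have := hante j hj
    obtain ⟨u, hu⟩ := this
    rw [sat_prefNegConj] at hu
    exact ⟨u, hu⟩
  choose u hu1 hu2 using key
  -- build tuple of n+1 worlds: index 0 ↦ w, index k+1 ↦ u k
  set g : Fin (n+1) → W := fun k => if hk : k.val = 0 then w else u (k.val - 1)
      (by omega) with hg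
  obtain ⟨k, j, hkj, hrel⟩ := M.apc hn i g
  rw [sat_disjUpTo]
  have hkv : (k : ℕ) < j := hkj
  have hjn : (j : ℕ) < n + 1 := j.isLt
  by_cases hk0 : (k : ℕ) = 0
  · -- rel i w (u (j-1)) : conclude f (j-1) at w
    have hj0 : (j : ℕ) ≠ 0 := by omega
    have hgj : g j = u ((j : ℕ) - 1) (by omega) := by rw [hg]; simp [hj0]
    have hgk : g k = w := by rw [hg]; simp [hk0]
    rw [hgk, hgj] at hrel
    refine ⟨(j : ℕ) - 1, by omega, ?_⟩
    exact hu2 _ _ w (M.symm _ _ _ hrel)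
  · -- contradiction case
    exfalso
    have hj0 : (j : ℕ) ≠ 0 := by omega
    have hgj : g j = u ((j : ℕ) - 1) (by omega) := by rw [hg]; simp [hj0]
    have hgk : g k = u ((k : ℕ) - 1) (by omega) := by rw [hg]; simp [hk0]
    rw [hgk, hgj] at hrel
    have h1 : Sat M (u ((j:ℕ)-1) (by omega)) (f ((k:ℕ)-1)) :=
      hu2 _ _ _ hrel
    exact hu1 _ (by omega : (j:ℕ)-1 ≤ n-1) ((k:ℕ)-1) (by omega) h1

theorem hderiv_sound {n m : ℕ} (hm : 0 < m) {Γ : Set (Fml m)} {φ : Fml m}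
    (d : Hderiv n m Γ φ) : SemConseq n m Γ φ := by
  induction d with
  | prem h => exact fun W M w hΓ => hΓ _ h
  | ax1 φ ψ =>
    intro W M w _
    simp only [sat_impF]; tauto
  | ax2 φ ψ χ =>
    intro W M w _
    simp only [sat_impF]; tauto
  | ax3 φ ψ =>
    intro W M w _
    simp only [sat_impF, sat_negF]; tauto
  | boxK φ ψ =>
    intro W M w _
    simp only [sat_impF]
    intro h1 h2
    intro z
    have h1z : Sat M z (φ.impF ψ) := h1 z
    rw [sat_impF] at h1z
    exact h1z (h2 z)
  | boxT φ =>
    intro W M w _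
    rw [sat_impF]
    intro h; exact h w
  | box5 φ =>
    intro W M w _
    rw [sat_impF]
    intro h
    exact fun _ => h
  | boxDual φ =>
    intro W M w _
    simp only [Sat, sat_negF]
    by_cases h : ∀ u, Sat M u φ
    · exact Or.inl h
    · push_neg at h; exact Or.inr h
  | agK i φ ψ =>
    intro W M w _
    simp only [sat_impF]
    intro h1 h2 z hz
    have h1z : Sat M z (φ.impF ψ) := h1 z hz
    rw [sat_impF] at h1z
    exact h1z (h2 z hz)
  | agT i φ =>
    intro W M w _
    rw [sat_impF]
    intro h; exact h w (M.refl i w)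
  | ag5 i φ =>
    intro W M w _
    rw [sat_impF]
    rintro ⟨u, hu, hφ⟩ z hz
    exact ⟨u, M.trans _ _ _ _ (M.symm _ _ _ hz) hu, hφ⟩
  | agDual i φ =>
    intro W M w _
    simp only [Sat, sat_negF]
    by_cases h : ∀ u, M.rel i w u → Sat M u φ
    · exact Or.inl h
    · push_neg at h
      obtain ⟨u, hu, hφ⟩ := h
      exact Or.inr ⟨u, hu, hφ⟩
  | bridge i φ =>
    intro W M w _
    rw [sat_impF]
    intro h z _; exact h z
  | ioa f => exact fun W M w _ => valid_ioaAx hm f W M w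
  | apc hn i f => exact fun W M w _ => valid_apcAx hn i f W M w
  | mp h1 h2 ih1 ih2 =>
    intro W M w hΓ
    have := ih1 W M w hΓ
    rw [sat_impF] at this
    exact this (ih2 W M w hΓ)
  | nec h ih =>
    intro W M w _
    intro u
    exact ih W M u (by simp)

theorem hderiv_valid {n m : ℕ} (hm : 0 < m) {φ : Fml m}
    (d : Hderiv n m ∅ φ) : Valid n m φ := by
  intro W M w
  exact hderiv_sound hm d W M w (by simp)


open Classical

/-! ### Encoding of formulas and tasks -/

def encF {m : ℕ} : Fml m → ℕ
  | .pos p => Nat.pair 0 p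
  | .neg p => Nat.pair 1 p
  | .and φ ψ => Nat.pair 2 (Nat.pair (encF φ) (encF ψ))
  | .or φ ψ => Nat.pair 3 (Nat.pair (encF φ) (encF ψ))
  | .box φ => Nat.pair 4 (encF φ)
  | .dia φ => Nat.pair 5 (encF φ)
  | .ag i φ => Nat.pair 6 (Nat.pair i (encF φ))
  | .dag i φ => Nat.pair 7 (Nat.pair i (encF φ))

theorem encF_inj {m : ℕ} : Function.Injective (@encF m) := by
  intro φ ψ h
  induction φ generalizing ψ <;> cases ψ <;>
    simp_all [encF, Nat.pair_eq_pair, Fin.val_inj] <;>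
    aesop

/-- Proof-search tasks. -/
inductive PTask (n m : ℕ) : Type
  | tand (x : ℕ) (φ ψ : Fml m)
  | tor (x : ℕ) (φ ψ : Fml m)
  | tbox (x : ℕ) (φ : Fml m)
  | tdia (x u : ℕ) (φ : Fml m)
  | tag (x : ℕ) (i : Fin m) (φ : Fml m)
  | tdag (x u : ℕ) (i : Fin m) (φ : Fml m)
  | trefl (i : Fin m) (x : ℕ)
  | teucl (i : Fin m) (x y z : ℕ)
  | tioa (u : Fin m → ℕ)
  | tapc (i : Fin m) (w : Fin (n+1) → ℕ)

def encT {n m : ℕ} : PTask n m → ℕ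
  | .tand x φ ψ => Nat.pair 0 (Nat.pair x (Nat.pair (encF φ) (encF ψ)))
  | .tor x φ ψ => Nat.pair 1 (Nat.pair x (Nat.pair (encF φ) (encF ψ)))
  | .tbox x φ => Nat.pair 2 (Nat.pair x (encF φ))
  | .tdia x u φ => Nat.pair 3 (Nat.pair x (Nat.pair u (encF φ)))
  | .tag x i φ => Nat.pair 4 (Nat.pair x (Nat.pair i (encF φ)))
  | .tdag x u i φ => Nat.pair 5 (Nat.pair x (Nat.pair u (Nat.pair i (encF φ))))
  | .trefl i x => Nat.pair 6 (Nat.pair i x)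
  | .teucl i x y z => Nat.pair 7 (Nat.pair i (Nat.pair x (Nat.pair y z)))
  | .tioa u => Nat.pair 8 (Encodable.encode (List.ofFn u))
  | .tapc i w => Nat.pair 9 (Nat.pair i (Encodable.encode (List.ofFn w)))

theorem encT_inj {n m : ℕ} : Function.Injective (@encT n m) := by
  intro τ σ h
  cases τ <;> cases σ <;>
    simp_all [encT, Nat.pair_eq_pair, encF_inj.eq_iff, Fin.val_inj,
      Encodable.encode_inj, List.ofFn_inj]
  case tapc.tapc =>
    funext j
    exact Fin.cases h.2.1 (fun j' => congrFun h.2.2 j') j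

noncomputable def sched (n m : ℕ) (hm : 0 < m) : ℕ → PTask n m := fun t =>
  let k := (Nat.unpair t).1
  if h : ∃ τ : PTask n m, encT τ = k then Classical.choose h else .trefl ⟨0, hm⟩ 0

theorem sched_fair {n m : ℕ} (hm : 0 < m) (τ : PTask n m) (t0 : ℕ) :
    ∃ t, t0 ≤ t ∧ sched n m hm t = τ := by
  refine ⟨Nat.pair (encT τ) t0, Nat.right_le_pair _ _, ?_⟩
  have h : ∃ σ : PTask n m, encT σ = (Nat.unpair (Nat.pair (encT τ) t0)).1 := by
    rw [Nat.unpair_pair]; exact ⟨τ, rfl⟩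
  rw [sched]
  simp only [Nat.unpair_pair] at h ⊢
  rw [dif_pos h]
  exact encT_inj (Classical.choose_spec h)

/-! ### height monotonicity -/

theorem seqH_succ {fl n m h R Γ} (d : SeqH fl n m h R Γ) : SeqH fl n m (h+1) R Γ := by
  induction d with
  | id w p => exact SeqH.id w p
  | andR _ _ ih1 ih2 => exact SeqH.andR ih1 ih2
  | orR _ ih => exact SeqH.orR ih
  | boxR hv _ ih => exact SeqH.boxR hv ih
  | diaR _ ih => exact SeqH.diaR ih
  | agR hfl hv _ ih => exact SeqH.agR hfl hv ih
  | agRKeep hfl hv _ ih => exact SeqH.agRKeep hfl hv ih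
  | dagR hfl _ ih => exact SeqH.dagR hfl ih
  | reflR hfl _ ih => exact SeqH.reflR hfl ih
  | euclR hfl _ ih => exact SeqH.euclR hfl ih
  | ioaR hfl u v hv _ ih => exact SeqH.ioaR hfl u v hv ih
  | apcR hn i w _ ih => exact SeqH.apcR hn i w ih
  | prR hfl hreach _ ih => exact SeqH.prR hfl hreach ih

theorem seqH_mono {fl n m h h' R Γ} (d : SeqH fl n m h R Γ) (hle : h ≤ h') :
    SeqH fl n m h' R Γ := by
  induction hle with
  | refl => exact d
  | step _ ih => exact seqH_succ ih

theorem seq_of_all_apc_prem {fl n m R Γ} (hn : 0 < n) (i : Fin m) (w : Fin (n+1) → ℕ)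
    (h : ∀ k j : Fin (n+1), k < j → Seq fl n m (((i, w k, w j) : RAtom m) ::ₘ R) Γ) :
    Seq fl n m R Γ := by
  have h' : ∀ p : Fin (n+1) × Fin (n+1), ∃ hh, p.1 < p.2 →
      SeqH fl n m hh (((i, w p.1, w p.2) : RAtom m) ::ₘ R) Γ := by
    intro p
    by_cases hp : p.1 < p.2
    · obtain ⟨hh, d⟩ := h p.1 p.2 hp; exact ⟨hh, fun _ => d⟩
    · exact ⟨0, fun c => absurd c hp⟩
  choose f hf using h'
  refine ⟨(Finset.univ.sup f) + 1, SeqH.apcR hn i w ?_⟩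
  intro k j hkj
  exact seqH_mono (hf (k, j) hkj) (Finset.le_sup (Finset.mem_univ (k, j)))

theorem mem_ioaAtoms {m : ℕ} {u : Fin m → ℕ} {v : ℕ} {a : RAtom m} :
    a ∈ ioaAtoms u v ↔ ∃ i : Fin m, a = (i, u i, v) := by
  simp only [ioaAtoms, Multiset.mem_coe, List.mem_map, List.mem_finRange, true_and]
  constructor
  · rintro ⟨i, rfl⟩; exact ⟨i, rfl⟩
  · rintro ⟨i, rfl⟩; exact ⟨i, rfl⟩


open Classical

/-- bare proof-search states -/
structure St (m : ℕ) : Type where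
  A : RAtoms m
  G : LFmls m
  bd : ℕ

def Inv (n m : ℕ) (S : St m) : Prop :=
  ¬ Seq G3flags n m S.A S.G ∧
  (∀ a ∈ S.A, a.2.1 < S.bd ∧ a.2.2 < S.bd) ∧
  (∀ e ∈ S.G, e.1 < S.bd)

theorem inv_fresh {n m : ℕ} {S : St m} (hI : Inv n m S) {v : ℕ} (hv : S.bd ≤ v) :
    freshIn v S.A S.G := by
  refine ⟨fun a ha => ?_, fun e he => ?_⟩
  · have := hI.2.1 a ha; omega
  · have := hI.2.2 e he; omega

theorem list_le_foldr_max (l : List ℕ) : ∀ x ∈ l, x ≤ l.foldr max 0 := by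
  induction l with
  | nil => intro x hx; simp at hx
  | cons a l ih =>
    intro x hx
    simp only [List.foldr_cons]
    rcases List.mem_cons.mp hx with rfl | h
    · exact le_max_left _ _
    · exact le_trans (ih x h) (le_max_right _ _)

noncomputable def pstep (n m : ℕ) (S : St m) : PTask n m → St m := fun τ =>
  match τ with
  | .tand x φ ψ =>
    if h : (x, Fml.and φ ψ) ∈ S.G then
      if h1 : Seq G3flags n m S.A ((x, Fml.and φ ψ) ::ₘ (x, φ) ::ₘ S.G.erase (x, Fml.and φ ψ)) then
        ⟨S.A, (x, Fml.and φ ψ) ::ₘ (x, ψ) ::ₘ S.G.erase (x, Fml.and φ ψ), S.bd⟩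
      else
        ⟨S.A, (x, Fml.and φ ψ) ::ₘ (x, φ) ::ₘ S.G.erase (x, Fml.and φ ψ), S.bd⟩
    else S
  | .tor x φ ψ =>
    if h : (x, Fml.or φ ψ) ∈ S.G then
      ⟨S.A, (x, Fml.or φ ψ) ::ₘ (x, φ) ::ₘ (x, ψ) ::ₘ S.G.erase (x, Fml.or φ ψ), S.bd⟩
    else S
  | .tbox x φ =>
    if h : (x, Fml.box φ) ∈ S.G then
      ⟨S.A, (x, Fml.box φ) ::ₘ (S.bd, φ) ::ₘ S.G.erase (x, Fml.box φ), S.bd + 1⟩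
    else S
  | .tdia x u φ =>
    if h : (x, Fml.dia φ) ∈ S.G then
      ⟨S.A, (x, Fml.dia φ) ::ₘ (u, φ) ::ₘ S.G.erase (x, Fml.dia φ), max S.bd (u+1)⟩
    else S
  | .tag x i φ =>
    if h : (x, Fml.ag i φ) ∈ S.G then
      ⟨((i, x, S.bd) : RAtom m) ::ₘ S.A, (S.bd, φ) ::ₘ S.G.erase (x, Fml.ag i φ), S.bd + 1⟩
    else S
  | .tdag x u i φ =>
    if h : (x, Fml.dag i φ) ∈ S.G ∧ ((i, x, u) : RAtom m) ∈ S.A then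
      ⟨S.A, (x, Fml.dag i φ) ::ₘ (u, φ) ::ₘ S.G.erase (x, Fml.dag i φ), S.bd⟩
    else S
  | .trefl i x => ⟨((i, x, x) : RAtom m) ::ₘ S.A, S.G, max S.bd (x+1)⟩
  | .teucl i x y z =>
    if h : ((i, x, y) : RAtom m) ∈ S.A ∧ ((i, x, z) : RAtom m) ∈ S.A.erase (i, x, y) then
      ⟨((i, y, z) : RAtom m) ::ₘ S.A, S.G, S.bd⟩
    else S
  | .tioa u =>
    ⟨ioaAtoms u S.bd + S.A, S.G, max (S.bd + 1) (((List.ofFn u).foldr max 0) + 1)⟩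
  | .tapc i w =>
    if hex : ∃ p : Fin (n+1) × Fin (n+1), p.1 < p.2 ∧
        ¬ Seq G3flags n m (((i, w p.1, w p.2) : RAtom m) ::ₘ S.A) S.G then
      ⟨((i, w (choose hex).1, w (choose hex).2) : RAtom m) ::ₘ S.A, S.G,
        max S.bd (((List.ofFn w).foldr max 0) + 1)⟩
    else S

theorem inv_pstep {n m : ℕ} {S : St m} (hI : Inv n m S) (τ : PTask n m) :
    Inv n m (pstep n m S τ) := by
  obtain ⟨hund, hbA, hbG⟩ := hI
  have hboundG : ∀ (x : ℕ) (φ : Fml m), (x, φ) ∈ S.G →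
      ∀ e ∈ S.G.erase (x, φ), e.1 < S.bd :=
    fun x φ hx e he => hbG e (Multiset.mem_of_mem_erase he)
  cases τ with
  | tand x φ ψ =>
    simp only [pstep]
    split_ifs with h h1
    · have hx : x < S.bd := hbG _ h
      refine ⟨?_, hbA, ?_⟩
      · rintro ⟨h2, d2⟩
        obtain ⟨hh1, d1⟩ := h1
        refine hund ⟨max hh1 h2 + 1, ?_⟩
        rw [← Multiset.cons_erase h]
        exact SeqH.andR (seqH_mono d1 (le_max_left _ _)) (seqH_mono d2 (le_max_right _ _))
      · intro e he
        dsimp only at he ⊢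
        rcases Multiset.mem_cons.mp he with rfl | he
        · exact hx
        · rcases Multiset.mem_cons.mp he with rfl | he
          · exact hx
          · exact hboundG _ _ h e he
    · have hx : x < S.bd := hbG _ h
      refine ⟨h1, hbA, ?_⟩
      intro e he
      dsimp only at he ⊢
      rcases Multiset.mem_cons.mp he with rfl | he
      · exact hx
      · rcases Multiset.mem_cons.mp he with rfl | he
        · exact hx
        · exact hboundG _ _ h e he
    · exact ⟨hund, hbA, hbG⟩
  | tor x φ ψ =>
    simp only [pstep]
    split_ifs with h
    · have hx : x < S.bd := hbG _ h
      refine ⟨?_, hbA, ?_⟩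
      · rintro ⟨hh, d⟩
        refine hund ⟨hh + 1, ?_⟩
        rw [← Multiset.cons_erase h]
        exact SeqH.orR d
      · intro e he
        dsimp only at he ⊢
        rcases Multiset.mem_cons.mp he with rfl | he
        · exact hx
        · rcases Multiset.mem_cons.mp he with rfl | he
          · exact hx
          · rcases Multiset.mem_cons.mp he with rfl | he
            · exact hx
            · exact hboundG _ _ h e he
    · exact ⟨hund, hbA, hbG⟩
  | tbox x φ =>
    simp only [pstep]
    split_ifs with h
    · have hx : x < S.bd := hbG _ h
      refine ⟨?_, fun a ha => ?_, ?_⟩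
      · rintro ⟨hh, d⟩
        refine hund ⟨hh + 1, ?_⟩
        rw [← Multiset.cons_erase h]
        refine SeqH.boxR ?_ d
        have := inv_fresh (n := n) ⟨hund, hbA, hbG⟩ (le_refl S.bd)
        rwa [← Multiset.cons_erase h] at this
      · dsimp only at ha ⊢
        have := hbA a ha; omega
      · intro e he
        dsimp only at he ⊢
        rcases Multiset.mem_cons.mp he with rfl | he
        · dsimp only; omega
        · rcases Multiset.mem_cons.mp he with rfl | he
          · dsimp only; omega
          · have := hboundG _ _ h e he; omega
    · exact ⟨hund, hbA, hbG⟩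
  | tdia x u φ =>
    simp only [pstep]
    split_ifs with h
    · have hx : x < S.bd := hbG _ h
      refine ⟨?_, fun a ha => ?_, ?_⟩
      · rintro ⟨hh, d⟩
        refine hund ⟨hh + 1, ?_⟩
        rw [← Multiset.cons_erase h]
        exact SeqH.diaR d
      · dsimp only at ha ⊢
        have := hbA a ha
        constructor <;> omega
      · intro e he
        dsimp only at he ⊢
        rcases Multiset.mem_cons.mp he with rfl | he
        · dsimp only; omega
        · rcases Multiset.mem_cons.mp he with rfl | he
          · dsimp only; omega
          · have := hboundG _ _ h e he; omega
    · exact ⟨hund, hbA, hbG⟩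
  | tag x i φ =>
    simp only [pstep]
    split_ifs with h
    · have hx : x < S.bd := hbG _ h
      refine ⟨?_, fun a ha => ?_, ?_⟩
      · rintro ⟨hh, d⟩
        refine hund ⟨hh + 1, ?_⟩
        rw [← Multiset.cons_erase h]
        refine SeqH.agR rfl ?_ d
        have := inv_fresh (n := n) ⟨hund, hbA, hbG⟩ (le_refl S.bd)
        rwa [← Multiset.cons_erase h] at this
      · dsimp only at ha ⊢
        rcases Multiset.mem_cons.mp ha with rfl | ha
        · dsimp only; omega
        · have := hbA a ha; constructor <;> omega
      · intro e he
        dsimp only at he ⊢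
        rcases Multiset.mem_cons.mp he with rfl | he
        · dsimp only; omega
        · have := hboundG _ _ h e he; omega
    · exact ⟨hund, hbA, hbG⟩
  | tdag x u i φ =>
    simp only [pstep]
    split_ifs with h
    · obtain ⟨hG, hA⟩ := h
      have hx : x < S.bd := hbG _ hG
      have hu : u < S.bd := (hbA _ hA).2
      refine ⟨?_, hbA, ?_⟩
      · rintro ⟨hh, d⟩
        refine hund ⟨hh + 1, ?_⟩
        rw [← Multiset.cons_erase hG, ← Multiset.cons_erase hA]
        refine SeqH.dagR rfl ?_
        rw [Multiset.cons_erase hA]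
        exact d
      · intro e he
        dsimp only at he ⊢
        rcases Multiset.mem_cons.mp he with rfl | he
        · exact hx
        · rcases Multiset.mem_cons.mp he with rfl | he
          · exact hu
          · exact hboundG _ _ hG e he
    · exact ⟨hund, hbA, hbG⟩
  | trefl i x =>
    simp only [pstep]
    refine ⟨?_, fun a ha => ?_, ?_⟩
    · rintro ⟨hh, d⟩
      exact hund ⟨hh + 1, SeqH.reflR rfl d⟩
    · dsimp only at ha ⊢
      rcases Multiset.mem_cons.mp ha with rfl | ha
      · dsimp only; omega
      · have := hbA a ha; constructor <;> omega
    · intro e he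
      dsimp only at he ⊢
      have := hbG e he; omega
  | teucl i x y z =>
    simp only [pstep]
    split_ifs with h
    · obtain ⟨h1, h2⟩ := h
      have hy : x < S.bd ∧ y < S.bd := hbA _ h1
      have hz : x < S.bd ∧ z < S.bd := hbA _ (Multiset.mem_of_mem_erase h2)
      refine ⟨?_, fun a ha => ?_, hbG⟩
      · rintro ⟨hh, d⟩
        refine hund ⟨hh + 1, ?_⟩
        rw [← Multiset.cons_erase h1, ← Multiset.cons_erase h2]
        refine SeqH.euclR rfl ?_
        have heq : ((i, y, z) : RAtom m) ::ₘ S.A =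
            ((i, x, y) : RAtom m) ::ₘ ((i, x, z) : RAtom m) ::ₘ ((i, y, z) : RAtom m) ::ₘ
              (S.A.erase ((i, x, y) : RAtom m)).erase ((i, x, z) : RAtom m) := by
          conv_lhs => rw [← Multiset.cons_erase h1]
          conv_lhs => rw [← Multiset.cons_erase h2]
          rw [Multiset.cons_swap ((i,y,z) : RAtom m) ((i,x,y) : RAtom m)]
          rw [Multiset.cons_swap ((i,y,z) : RAtom m) ((i,x,z) : RAtom m)]
        rw [← heq]
        exact d
      · dsimp only at ha ⊢
        rcases Multiset.mem_cons.mp ha with rfl | ha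
        · dsimp only; omega
        · exact hbA a ha
    · exact ⟨hund, hbA, hbG⟩
  | tioa u =>
    simp only [pstep]
    refine ⟨?_, fun a ha => ?_, ?_⟩
    · rintro ⟨hh, d⟩
      exact hund ⟨hh + 1, SeqH.ioaR rfl u S.bd (inv_fresh ⟨hund, hbA, hbG⟩ (le_refl S.bd)) d⟩
    · dsimp only at ha ⊢
      rw [Multiset.mem_add] at ha
      rcases ha with ha | ha
      · obtain ⟨i, rfl⟩ := mem_ioaAtoms.mp ha
        have hui : u i ≤ (List.ofFn u).foldr max 0 :=
          list_le_foldr_max _ _ (by rw [List.mem_ofFn]; exact ⟨i, rfl⟩)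
        dsimp only; constructor <;> omega
      · have := hbA a ha; constructor <;> omega
    · intro e he
      dsimp only at he ⊢
      have := hbG e he; omega
  | tapc i w =>
    simp only [pstep]
    split_ifs with hex
    · have hspec := Classical.choose_spec hex
      refine ⟨?_, fun a ha => ?_, ?_⟩
      · exact hspec.2
      · dsimp only at ha ⊢
        rcases Multiset.mem_cons.mp ha with rfl | ha
        · have hk : w (choose hex).1 ≤ (List.ofFn w).foldr max 0 :=
            list_le_foldr_max _ _ (by rw [List.mem_ofFn]; exact ⟨_, rfl⟩)
          have hj : w (choose hex).2 ≤ (List.ofFn w).foldr max 0 :=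
            list_le_foldr_max _ _ (by rw [List.mem_ofFn]; exact ⟨_, rfl⟩)
          dsimp only; constructor <;> omega
        · have := hbA a ha; constructor <;> omega
      · intro e he
        dsimp only at he ⊢
        have := hbG e he; omega
    · exact ⟨hund, hbA, hbG⟩


open Classical

theorem mem_cons_erase' {α : Type} [DecidableEq α] {e p : α} {G : Multiset α} (he : e ∈ G) :
    e ∈ p ::ₘ G.erase p := by
  by_cases h : e = p
  · simp [h]
  · rw [Multiset.mem_cons]
    right
    rwa [Multiset.mem_erase_of_ne h]

/-- atoms persist through a step -/
theorem pstep_atoms {n m : ℕ} (S : St m) (τ : PTask n m) :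
    ∀ a ∈ S.A, a ∈ (pstep n m S τ).A := by
  intro a ha
  cases τ <;> simp only [pstep] <;> (try split_ifs) <;>
    simp_all [Multiset.mem_cons, Multiset.mem_add]

/-- formulas persist through a step, except an `ag`-formula may be replaced
by a fresh witness -/
theorem mem_cce {α : Type} [DecidableEq α] {e p q : α} {G : Multiset α} (he : e ∈ G) :
    e ∈ p ::ₘ q ::ₘ G.erase p := by
  by_cases h : e = p
  · simp [h]
  · rw [Multiset.mem_cons]; right
    rw [Multiset.mem_cons]; right
    rwa [Multiset.mem_erase_of_ne h]

theorem mem_ccce {α : Type} [DecidableEq α] {e p q r : α} {G : Multiset α} (he : e ∈ G) :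
    e ∈ p ::ₘ q ::ₘ r ::ₘ G.erase p := by
  by_cases h : e = p
  · simp [h]
  · rw [Multiset.mem_cons]; right
    rw [Multiset.mem_cons]; right
    rw [Multiset.mem_cons]; right
    rwa [Multiset.mem_erase_of_ne h]

/-- formulas persist through a step, except an `ag`-formula may be replaced
by a fresh witness -/
theorem pstep_fmls {n m : ℕ} (S : St m) (τ : PTask n m) :
    ∀ e ∈ S.G, e ∈ (pstep n m S τ).G ∨
      ∃ (x : ℕ) (i : Fin m) (φ : Fml m) (v : ℕ), e = (x, Fml.ag i φ) ∧
        ((i, x, v) : RAtom m) ∈ (pstep n m S τ).A ∧ (v, φ) ∈ (pstep n m S τ).G := by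
  intro e he
  cases τ with
  | tag x i φ =>
    simp only [pstep]
    split_ifs with h
    · by_cases hep : e = (x, Fml.ag i φ)
      · subst hep
        exact Or.inr ⟨x, i, φ, S.bd, rfl, by simp, by simp⟩
      · left
        dsimp only
        rw [Multiset.mem_cons]
        right
        rwa [Multiset.mem_erase_of_ne hep]
    · exact Or.inl he
  | trefl i x => exact Or.inl he
  | tioa u => exact Or.inl he
  | teucl i x y z => simp only [pstep]; split_ifs <;> exact Or.inl he
  | tapc i w => simp only [pstep]; split_ifs <;> exact Or.inl he
  | tand x φ ψ =>
    simp only [pstep]; split_ifs <;> left <;> (try dsimp only) <;>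
      first | exact mem_cce he | exact he
  | tor x φ ψ =>
    simp only [pstep]; split_ifs <;> left <;> (try dsimp only) <;>
      first | exact mem_ccce he | exact he
  | tbox x φ =>
    simp only [pstep]; split_ifs <;> left <;> (try dsimp only) <;>
      first | exact mem_cce he | exact he
  | tdia x u φ =>
    simp only [pstep]; split_ifs <;> left <;> (try dsimp only) <;>
      first | exact mem_cce he | exact he
  | tdag x u i φ =>
    simp only [pstep]; split_ifs <;> left <;> (try dsimp only) <;>
      first | exact mem_cce he | exact he

/-! ### firing lemmas -/

theorem fire_and {n m : ℕ} (S : St m) {x : ℕ} {φ ψ : Fml m}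
    (h : (x, Fml.and φ ψ) ∈ S.G) :
    (x, φ) ∈ (pstep n m S (.tand x φ ψ)).G ∨ (x, ψ) ∈ (pstep n m S (.tand x φ ψ)).G := by
  simp only [pstep, dif_pos h]
  split_ifs <;> simp

theorem fire_or {n m : ℕ} (S : St m) {x : ℕ} {φ ψ : Fml m}
    (h : (x, Fml.or φ ψ) ∈ S.G) :
    (x, φ) ∈ (pstep n m S (.tor x φ ψ)).G ∧ (x, ψ) ∈ (pstep n m S (.tor x φ ψ)).G := by
  simp only [pstep, dif_pos h]; simp

theorem fire_box {n m : ℕ} (S : St m) {x : ℕ} {φ : Fml m}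
    (h : (x, Fml.box φ) ∈ S.G) :
    ∃ v, (v, φ) ∈ (pstep n m S (.tbox x φ)).G := by
  refine ⟨S.bd, ?_⟩
  simp only [pstep, dif_pos h]; simp

theorem fire_dia {n m : ℕ} (S : St m) {x u : ℕ} {φ : Fml m}
    (h : (x, Fml.dia φ) ∈ S.G) :
    (u, φ) ∈ (pstep n m S (.tdia x u φ)).G := by
  simp only [pstep, dif_pos h]; simp

theorem fire_ag {n m : ℕ} (S : St m) {x : ℕ} {i : Fin m} {φ : Fml m}
    (h : (x, Fml.ag i φ) ∈ S.G) :
    ∃ v, ((i, x, v) : RAtom m) ∈ (pstep n m S (.tag x i φ)).A ∧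
      (v, φ) ∈ (pstep n m S (.tag x i φ)).G := by
  refine ⟨S.bd, ?_⟩
  simp only [pstep, dif_pos h]; simp

theorem fire_dag {n m : ℕ} (S : St m) {x u : ℕ} {i : Fin m} {φ : Fml m}
    (h1 : (x, Fml.dag i φ) ∈ S.G) (h2 : ((i, x, u) : RAtom m) ∈ S.A) :
    (u, φ) ∈ (pstep n m S (.tdag x u i φ)).G := by
  simp only [pstep, dif_pos (And.intro h1 h2)]; simp

theorem fire_refl {n m : ℕ} (S : St m) (i : Fin m) (x : ℕ) :
    ((i, x, x) : RAtom m) ∈ (pstep n m S (.trefl i x)).A := by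
  simp only [pstep]; simp

theorem fire_eucl {n m : ℕ} (S : St m) {i : Fin m} {x y z : ℕ}
    (h1 : ((i, x, y) : RAtom m) ∈ S.A) (h2 : ((i, x, z) : RAtom m) ∈ S.A.erase (i, x, y)) :
    ((i, y, z) : RAtom m) ∈ (pstep n m S (.teucl i x y z)).A := by
  simp only [pstep, dif_pos (And.intro h1 h2)]; simp

theorem fire_ioa {n m : ℕ} (S : St m) (u : Fin m → ℕ) :
    ∃ v, ∀ i : Fin m, ((i, u i, v) : RAtom m) ∈ (pstep n m S (.tioa u)).A := by
  refine ⟨S.bd, fun i => ?_⟩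
  simp only [pstep]
  rw [Multiset.mem_add]
  exact Or.inl (mem_ioaAtoms.mpr ⟨i, rfl⟩)

theorem fire_apc {n m : ℕ} {S : St m} (hI : Inv n m S) (hn : 0 < n) (i : Fin m)
    (w : Fin (n+1) → ℕ) :
    ∃ k j : Fin (n+1), k < j ∧ ((i, w k, w j) : RAtom m) ∈ (pstep n m S (.tapc i w)).A := by
  have hex : ∃ p : Fin (n+1) × Fin (n+1), p.1 < p.2 ∧
      ¬ Seq G3flags n m (((i, w p.1, w p.2) : RAtom m) ::ₘ S.A) S.G := by
    by_contra hc
    push_neg at hc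
    exact hI.1 (seq_of_all_apc_prem hn i w (fun k j hkj => hc (k, j) hkj))
  have hspec := Classical.choose_spec hex
  refine ⟨(choose hex).1, (choose hex).2, hspec.1, ?_⟩
  simp only [pstep, dif_pos hex]
  simp


open Classical

section Chain

variable (n m : ℕ) (hm : 0 < m) (S0 : St m)

noncomputable def pchain : ℕ → St m
  | 0 => S0
  | t+1 => pstep n m (pchain t) (sched n m hm t)

theorem inv_pchain (hS0 : Inv n m S0) (t : ℕ) : Inv n m (pchain n m hm S0 t) := by
  induction t with
  | zero => exact hS0
  | succ t ih => exact inv_pstep ih _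

/-- the limit set of relational atoms -/
def AΩ : Set (RAtom m) := {a | ∃ t, a ∈ (pchain n m hm S0 t).A}
/-- the limit set of labelled formulas -/
def GΩ : Set (LFml m) := {e | ∃ t, e ∈ (pchain n m hm S0 t).G}

theorem atoms_mono {t t' : ℕ} (h : t ≤ t') {a : RAtom m}
    (ha : a ∈ (pchain n m hm S0 t).A) : a ∈ (pchain n m hm S0 t').A := by
  induction h with
  | refl => exact ha
  | step _ ih => exact pstep_atoms _ _ _ ih

theorem fmls_persist {t t' : ℕ} (h : t ≤ t') {e : LFml m}
    (hnag : ∀ (i : Fin m) (ψ : Fml m), e.2 ≠ Fml.ag i ψ)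
    (he : e ∈ (pchain n m hm S0 t).G) : e ∈ (pchain n m hm S0 t').G := by
  induction h with
  | refl => exact he
  | step _ ih =>
    rcases pstep_fmls _ _ _ ih with h1 | ⟨x, i, ψ, v, heq, _, _⟩
    · exact h1
    · exact absurd (by rw [heq]) (hnag i ψ)

/-- an `ag`-formula appearing anywhere yields a witness in the limit -/
theorem ag_witness {t : ℕ} {x : ℕ} {i : Fin m} {φ : Fml m}
    (he : (x, Fml.ag i φ) ∈ (pchain n m hm S0 t).G) :
    ∃ v, ((i, x, v) : RAtom m) ∈ AΩ n m hm S0 ∧ (v, φ) ∈ GΩ n m hm S0 := by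
  obtain ⟨t1, ht1, hsch⟩ := sched_fair hm (.tag x i φ) t
  by_cases hdrop : ∃ s, t ≤ s ∧ s < t1 ∧ (x, Fml.ag i φ) ∈ (pchain n m hm S0 s).G ∧
      (x, Fml.ag i φ) ∉ (pchain n m hm S0 (s+1)).G
  · obtain ⟨s, _, _, hin, hout⟩ := hdrop
    rcases pstep_fmls _ _ _ hin with h1 | ⟨x', i', ψ', v, heq, hA, hG⟩
    · exact absurd h1 hout
    · obtain ⟨rfl, rfl, rfl⟩ : x' = x ∧ i' = i ∧ ψ' = φ := by
        have := heq
        simp only [Prod.mk.injEq, Fml.ag.injEq] at this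
        exact ⟨this.1.symm, this.2.1.symm, this.2.2.symm⟩
      exact ⟨v, ⟨s+1, hA⟩, ⟨s+1, hG⟩⟩
  · push_neg at hdrop
    have hpersist : ∀ s, t ≤ s → s ≤ t1 → (x, Fml.ag i φ) ∈ (pchain n m hm S0 s).G := by
      intro s hs
      induction s, hs using Nat.le_induction with
      | base => exact fun _ => he
      | succ s hs ih =>
        intro hst1
        have h1 : s < t1 := by omega
        exact hdrop s hs h1 (ih (by omega))
    have hmem := hpersist t1 ht1 le_rfl
    obtain ⟨v, hA, hG⟩ := fire_ag (n := n) (pchain n m hm S0 t1) hmem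
    refine ⟨v, ⟨t1+1, ?_⟩, ⟨t1+1, ?_⟩⟩
    · rw [pchain, hsch]; exact hA
    · rw [pchain, hsch]; exact hG

theorem mem_at_fair {e : LFml m} (hnag : ∀ (i : Fin m) (ψ : Fml m), e.2 ≠ Fml.ag i ψ)
    (he : e ∈ GΩ n m hm S0) (τ : PTask n m) :
    ∃ t, e ∈ (pchain n m hm S0 t).G ∧ sched n m hm t = τ := by
  obtain ⟨t0, h0⟩ := he
  obtain ⟨t1, ht1, hsch⟩ := sched_fair hm τ t0
  exact ⟨t1, fmls_persist n m hm S0 ht1 hnag h0, hsch⟩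

theorem limit_and {x : ℕ} {φ ψ : Fml m} (he : (x, Fml.and φ ψ) ∈ GΩ n m hm S0) :
    (x, φ) ∈ GΩ n m hm S0 ∨ (x, ψ) ∈ GΩ n m hm S0 := by
  obtain ⟨t, hmem, hsch⟩ := mem_at_fair n m hm S0 (by intro i ψ' h; cases h) he (.tand x φ ψ)
  rcases fire_and (n := n) _ hmem with h | h
  · exact Or.inl ⟨t+1, by rw [pchain, hsch]; exact h⟩
  · exact Or.inr ⟨t+1, by rw [pchain, hsch]; exact h⟩

theorem limit_or {x : ℕ} {φ ψ : Fml m} (he : (x, Fml.or φ ψ) ∈ GΩ n m hm S0) :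
    (x, φ) ∈ GΩ n m hm S0 ∧ (x, ψ) ∈ GΩ n m hm S0 := by
  obtain ⟨t, hmem, hsch⟩ := mem_at_fair n m hm S0 (by intro i ψ' h; cases h) he (.tor x φ ψ)
  obtain ⟨h1, h2⟩ := fire_or (n := n) _ hmem
  exact ⟨⟨t+1, by rw [pchain, hsch]; exact h1⟩, ⟨t+1, by rw [pchain, hsch]; exact h2⟩⟩

theorem limit_box {x : ℕ} {φ : Fml m} (he : (x, Fml.box φ) ∈ GΩ n m hm S0) :
    ∃ v, (v, φ) ∈ GΩ n m hm S0 := by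
  obtain ⟨t, hmem, hsch⟩ := mem_at_fair n m hm S0 (by intro i ψ' h; cases h) he (.tbox x φ)
  obtain ⟨v, hv⟩ := fire_box (n := n) _ hmem
  exact ⟨v, ⟨t+1, by rw [pchain, hsch]; exact hv⟩⟩

theorem limit_dia {x : ℕ} {φ : Fml m} (he : (x, Fml.dia φ) ∈ GΩ n m hm S0) (u : ℕ) :
    (u, φ) ∈ GΩ n m hm S0 := by
  obtain ⟨t, hmem, hsch⟩ := mem_at_fair n m hm S0 (by intro i ψ' h; cases h) he (.tdia x u φ)
  have := fire_dia (n := n) (u := u) _ hmem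
  exact ⟨t+1, by rw [pchain, hsch]; exact this⟩

theorem limit_ag {x : ℕ} {i : Fin m} {φ : Fml m} (he : (x, Fml.ag i φ) ∈ GΩ n m hm S0) :
    ∃ v, ((i, x, v) : RAtom m) ∈ AΩ n m hm S0 ∧ (v, φ) ∈ GΩ n m hm S0 := by
  obtain ⟨t, ht⟩ := he
  exact ag_witness n m hm S0 ht

theorem limit_dag {x u : ℕ} {i : Fin m} {φ : Fml m} (he : (x, Fml.dag i φ) ∈ GΩ n m hm S0)
    (ha : ((i, x, u) : RAtom m) ∈ AΩ n m hm S0) : (u, φ) ∈ GΩ n m hm S0 := by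
  obtain ⟨te, hte⟩ := he
  obtain ⟨ta, hta⟩ := ha
  have hnag : ∀ (i' : Fin m) (ψ' : Fml m), ((x, Fml.dag i φ) : LFml m).2 ≠ Fml.ag i' ψ' := by
    intro i' ψ' h; cases h
  have he' : (x, Fml.dag i φ) ∈ (pchain n m hm S0 (max te ta)).G :=
    fmls_persist n m hm S0 (le_max_left _ _) hnag hte
  have ha' : ((i, x, u) : RAtom m) ∈ (pchain n m hm S0 (max te ta)).A :=
    atoms_mono n m hm S0 (le_max_right _ _) hta
  obtain ⟨t1, ht1, hsch⟩ := sched_fair hm (.tdag x u i φ) (max te ta)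
  have he'' := fmls_persist n m hm S0 ht1 hnag he'
  have ha'' := atoms_mono n m hm S0 ht1 ha'
  have := fire_dag (n := n) _ he'' ha''
  exact ⟨t1+1, by rw [pchain, hsch]; exact this⟩

theorem limit_refl (i : Fin m) (x : ℕ) : ((i, x, x) : RAtom m) ∈ AΩ n m hm S0 := by
  obtain ⟨t1, _, hsch⟩ := sched_fair hm (.trefl i x) 0
  exact ⟨t1+1, by rw [pchain, hsch]; exact fire_refl _ i x⟩

theorem limit_eucl {i : Fin m} {x y z : ℕ} (h1 : ((i, x, y) : RAtom m) ∈ AΩ n m hm S0)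
    (h2 : ((i, x, z) : RAtom m) ∈ AΩ n m hm S0) : ((i, y, z) : RAtom m) ∈ AΩ n m hm S0 := by
  by_cases hyz : y = z
  · subst hyz; exact limit_refl n m hm S0 i y
  · obtain ⟨t1, ht1⟩ := h1
    obtain ⟨t2, ht2⟩ := h2
    have ha1 : ((i, x, y) : RAtom m) ∈ (pchain n m hm S0 (max t1 t2)).A :=
      atoms_mono n m hm S0 (le_max_left _ _) ht1
    have ha2 : ((i, x, z) : RAtom m) ∈ (pchain n m hm S0 (max t1 t2)).A :=
      atoms_mono n m hm S0 (le_max_right _ _) ht2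
    obtain ⟨t3, ht3, hsch⟩ := sched_fair hm (.teucl i x y z) (max t1 t2)
    have hb1 := atoms_mono n m hm S0 ht3 ha1
    have hb2 := atoms_mono n m hm S0 ht3 ha2
    have hb2' : ((i, x, z) : RAtom m) ∈ (pchain n m hm S0 t3).A.erase (i, x, y) := by
      rw [Multiset.mem_erase_of_ne
        (by intro hc; exact hyz (congrArg (fun a : RAtom m => a.2.2) hc).symm)]
      exact hb2
    have := fire_eucl (n := n) _ hb1 hb2'
    exact ⟨t3+1, by rw [pchain, hsch]; exact this⟩

theorem limit_ioa (u : Fin m → ℕ) :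
    ∃ v, ∀ i : Fin m, ((i, u i, v) : RAtom m) ∈ AΩ n m hm S0 := by
  obtain ⟨t1, _, hsch⟩ := sched_fair hm (.tioa u) 0
  obtain ⟨v, hv⟩ := fire_ioa (n := n) (pchain n m hm S0 t1) u
  exact ⟨v, fun i => ⟨t1+1, by rw [pchain, hsch]; exact hv i⟩⟩

theorem limit_apc (hS0 : Inv n m S0) (hn : 0 < n) (i : Fin m) (w : Fin (n+1) → ℕ) :
    ∃ k j : Fin (n+1), k < j ∧ ((i, w k, w j) : RAtom m) ∈ AΩ n m hm S0 := by
  obtain ⟨t1, _, hsch⟩ := sched_fair hm (.tapc i w) 0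
  obtain ⟨k, j, hkj, hmem⟩ := fire_apc (inv_pchain n m hm S0 hS0 t1) hn i w
  exact ⟨k, j, hkj, ⟨t1+1, by rw [pchain, hsch]; exact hmem⟩⟩

theorem limit_id (hS0 : Inv n m S0) (x p : ℕ) :
    ¬ ((x, Fml.pos p) ∈ GΩ n m hm S0 ∧ (x, Fml.neg p) ∈ GΩ n m hm S0) := by
  rintro ⟨⟨t1, h1⟩, ⟨t2, h2⟩⟩
  have hnag1 : ∀ (i : Fin m) (ψ : Fml m), ((x, Fml.pos p) : LFml m).2 ≠ Fml.ag i ψ := by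
    intro i ψ h; cases h
  have hnag2 : ∀ (i : Fin m) (ψ : Fml m), ((x, Fml.neg p) : LFml m).2 ≠ Fml.ag i ψ := by
    intro i ψ h; cases h
  set t := max t1 t2
  have hp : (x, Fml.pos p) ∈ (pchain n m hm S0 t).G :=
    fmls_persist n m hm S0 (le_max_left _ _) hnag1 h1
  have hq : (x, Fml.neg p) ∈ (pchain n m hm S0 t).G :=
    fmls_persist n m hm S0 (le_max_right _ _) hnag2 h2
  have hq' : (x, Fml.neg p) ∈ (pchain n m hm S0 t).G.erase (x, Fml.pos p) := by
    rw [Multiset.mem_erase_of_ne (by simp)]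
    exact hq
  apply (inv_pchain n m hm S0 hS0 t).1
  refine ⟨0, ?_⟩
  have heq : (pchain n m hm S0 t).G =
      (x, Fml.pos p) ::ₘ (x, Fml.neg p) ::ₘ
        (((pchain n m hm S0 t).G.erase (x, Fml.pos p)).erase (x, Fml.neg p)) := by
    rw [Multiset.cons_erase hq', Multiset.cons_erase hp]
  rw [heq]
  exact SeqH.id x p

/-! ### the limit model -/

noncomputable def limModel (hS0 : Inv n m S0) : ModelOn n m ℕ where
  nonemp := ⟨0⟩
  rel := fun i x y => ((i, x, y) : RAtom m) ∈ AΩ n m hm S0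
  refl := fun i x => limit_refl n m hm S0 i x
  symm := fun i x y hxy =>
    limit_eucl n m hm S0 hxy (limit_refl n m hm S0 i x)
  trans := fun i x y z hxy hyz =>
    limit_eucl n m hm S0 (limit_eucl n m hm S0 hxy (limit_refl n m hm S0 i x)) hyz
  ioa := fun u => limit_ioa n m hm S0 u
  apc := fun hn i w => limit_apc n m hm S0 hS0 hn i w
  val := fun p => {x | (x, Fml.pos p) ∉ GΩ n m hm S0}

theorem truth_lemma (hS0 : Inv n m S0) :
    ∀ (φ : Fml m) (x : ℕ), (x, φ) ∈ GΩ n m hm S0 →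
      ¬ Sat (limModel n m hm S0 hS0) x φ := by
  intro φ
  induction φ with
  | pos p =>
    intro x he hs
    exact hs he
  | neg p =>
    intro x he hs
    exact hs (fun hpos => limit_id n m hm S0 hS0 x p ⟨hpos, he⟩)
  | and φ ψ ih1 ih2 =>
    intro x he hs
    rcases limit_and n m hm S0 he with h | h
    · exact ih1 x h hs.1
    · exact ih2 x h hs.2
  | or φ ψ ih1 ih2 =>
    intro x he hs
    obtain ⟨h1, h2⟩ := limit_or n m hm S0 he
    rcases hs with h | h
    · exact ih1 x h1 h
    · exact ih2 x h2 h
  | box φ ih =>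
    intro x he hs
    obtain ⟨v, hv⟩ := limit_box n m hm S0 he
    exact ih v hv (hs v)
  | dia φ ih =>
    intro x he hs
    obtain ⟨u, hu⟩ := hs
    exact ih u (limit_dia n m hm S0 he u) hu
  | ag i φ ih =>
    intro x he hs
    obtain ⟨v, hA, hG⟩ := limit_ag n m hm S0 he
    exact ih v hG (hs v hA)
  | dag i φ ih =>
    intro x he hs
    obtain ⟨u, hrel, hu⟩ := hs
    exact ih u (limit_dag n m hm S0 he hrel) hu

end Chain

theorem not_seq_countermodel {n m : ℕ} (hm : 0 < m) {φ : Fml m} {w : ℕ}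
    (h : ¬ Seq G3flags n m 0 {(w, φ)}) : ¬ Valid n m φ := by
  set S0 : St m := ⟨0, {(w, φ)}, w + 1⟩ with hS0def
  have hS0 : Inv n m S0 := by
    refine ⟨h, ?_, ?_⟩
    · intro a ha; simp [hS0def] at ha
    · intro e he
      have : e = (w, φ) := by simpa [hS0def] using he
      subst this
      simp [hS0def]
  have hmem : (w, φ) ∈ GΩ n m hm S0 := ⟨0, by simp [pchain, hS0def]⟩
  intro hval
  exact truth_lemma n m hm S0 hS0 φ w hmem (hval ℕ (limModel n m hm S0 hS0) w)


open Classical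

section Hilbert
variable {n m : ℕ}

theorem Hderiv.mono {Γ Γ' : Set (Fml m)} {φ : Fml m} (h : Hderiv n m Γ φ) (hsub : Γ ⊆ Γ') :
    Hderiv n m Γ' φ := by
  induction h generalizing Γ' with
  | prem h => exact .prem (hsub h)
  | ax1 φ ψ => exact .ax1 φ ψ
  | ax2 φ ψ χ => exact .ax2 φ ψ χ
  | ax3 φ ψ => exact .ax3 φ ψ
  | boxK φ ψ => exact .boxK φ ψ
  | boxT φ => exact .boxT φ
  | box5 φ => exact .box5 φ
  | boxDual φ => exact .boxDual φ
  | agK i φ ψ => exact .agK i φ ψ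
  | agT i φ => exact .agT i φ
  | ag5 i φ => exact .ag5 i φ
  | agDual i φ => exact .agDual i φ
  | bridge i φ => exact .bridge i φ
  | ioa f => exact .ioa f
  | apc hn i f => exact .apc hn i f
  | mp h1 h2 ih1 ih2 => exact .mp (ih1 hsub) (ih2 hsub)
  | nec h ih => exact .nec h

theorem impId {Γ : Set (Fml m)} (φ : Fml m) : Hderiv n m Γ (φ.impF φ) :=
  .mp (.mp (.ax2 φ (φ.impF φ) φ) (.ax1 φ (φ.impF φ))) (.ax1 φ φ)

theorem deduction : ∀ {Γ' : Set (Fml m)} {ψ : Fml m}, Hderiv n m Γ' ψ →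
    ∀ {Γ : Set (Fml m)} {φ : Fml m}, Γ' = insert φ Γ → Hderiv n m Γ (φ.impF ψ) := by
  intro Γ' ψ h
  induction h with
  | @prem _ χ h =>
    intro Γ φ hΓ
    subst hΓ
    rcases h with h | h
    · subst h; exact impId _
    · exact .mp (.ax1 χ φ) (.prem h)
  | ax1 α β => intro Γ φ hΓ; exact .mp (.ax1 _ φ) (.ax1 α β)
  | ax2 α β γ => intro Γ φ hΓ; exact .mp (.ax1 _ φ) (.ax2 α β γ)
  | ax3 α β => intro Γ φ hΓ; exact .mp (.ax1 _ φ) (.ax3 α β)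
  | boxK α β => intro Γ φ hΓ; exact .mp (.ax1 _ φ) (.boxK α β)
  | boxT α => intro Γ φ hΓ; exact .mp (.ax1 _ φ) (.boxT α)
  | box5 α => intro Γ φ hΓ; exact .mp (.ax1 _ φ) (.box5 α)
  | boxDual α => intro Γ φ hΓ; exact .mp (.ax1 _ φ) (.boxDual α)
  | agK i α β => intro Γ φ hΓ; exact .mp (.ax1 _ φ) (.agK i α β)
  | agT i α => intro Γ φ hΓ; exact .mp (.ax1 _ φ) (.agT i α)
  | ag5 i α => intro Γ φ hΓ; exact .mp (.ax1 _ φ) (.ag5 i α)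
  | agDual i α => intro Γ φ hΓ; exact .mp (.ax1 _ φ) (.agDual i α)
  | bridge i α => intro Γ φ hΓ; exact .mp (.ax1 _ φ) (.bridge i α)
  | ioa f => intro Γ φ hΓ; exact .mp (.ax1 _ φ) (.ioa f)
  | apc hn i f => intro Γ φ hΓ; exact .mp (.ax1 _ φ) (.apc hn i f)
  | @mp _ α β h1 h2 ih1 ih2 =>
    intro Γ φ hΓ
    exact .mp (.mp (.ax2 φ α β) (ih1 hΓ)) (ih2 hΓ)
  | @nec _ α h ih =>
    intro Γ φ hΓ
    exact .mp (.ax1 _ φ) (.nec h)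

theorem ded {Γ : Set (Fml m)} {φ ψ : Fml m} (h : Hderiv n m (insert φ Γ) ψ) :
    Hderiv n m Γ (φ.impF ψ) := deduction h rfl

theorem wk1 {Γ : Set (Fml m)} {φ ψ : Fml m} (h : Hderiv n m Γ ψ) :
    Hderiv n m (insert φ Γ) ψ := h.mono (Set.subset_insert _ _)

theorem prem0 {Γ : Set (Fml m)} (φ : Fml m) : Hderiv n m (insert φ Γ) φ :=
  .prem (Set.mem_insert _ _)

/-- hypothetical syllogism -/
theorem hsyl {Γ : Set (Fml m)} {φ ψ χ : Fml m} (h1 : Hderiv n m Γ (φ.impF ψ))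
    (h2 : Hderiv n m Γ (ψ.impF χ)) : Hderiv n m Γ (φ.impF χ) :=
  ded (.mp (wk1 h2) (.mp (wk1 h1) (prem0 φ)))

/-- `¬φ → (φ → ψ)` -/
theorem l2 {Γ : Set (Fml m)} (φ ψ : Fml m) :
    Hderiv n m Γ (φ.negF.impF (φ.impF ψ)) :=
  hsyl (.ax1 φ.negF ψ.negF) (.ax3 φ ψ)

/-- from `¬φ` and `φ` derive anything -/
theorem absurdR {Γ : Set (Fml m)} {φ : Fml m} (ψ : Fml m)
    (h1 : Hderiv n m Γ φ.negF) (h2 : Hderiv n m Γ φ) : Hderiv n m Γ ψ :=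
  .mp (.mp (l2 φ ψ) h1) h2

/-- Clavius: `(¬φ → φ) → φ` -/
theorem clavius {Γ : Set (Fml m)} (φ : Fml m) :
    Hderiv n m Γ ((φ.negF.impF φ).impF φ) := by
  have h2 : Hderiv n m (insert (φ.negF.impF φ) Γ) (φ.negF.impF (φ.negF.impF φ).negF) :=
    ded (absurdR _ (prem0 _) (.mp (wk1 (prem0 _)) (prem0 _)))
  exact ded (.mp (.mp (.ax3 (φ.negF.impF φ) φ) h2) (prem0 _))

/-- reductio: `(φ → ¬φ) → ¬φ` -/
theorem reductio {Γ : Set (Fml m)} (φ : Fml m) :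
    Hderiv n m Γ ((φ.impF φ.negF).impF φ.negF) := by
  have := clavius (n := n) (Γ := Γ) (φ := φ.negF)
  rwa [Fml.negF_negF] at this

/-- contraposition rule -/
theorem contrap {Γ : Set (Fml m)} {φ ψ : Fml m} (h : Hderiv n m Γ (φ.impF ψ)) :
    Hderiv n m Γ (ψ.negF.impF φ.negF) := by
  have hax := Hderiv.ax3 (n := n) (Γ := Γ) ψ.negF φ.negF
  rw [Fml.negF_negF, Fml.negF_negF] at hax
  exact .mp hax h

theorem andE1 {Γ : Set (Fml m)} (φ ψ : Fml m) :
    Hderiv n m Γ ((Fml.and φ ψ).impF φ) := by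
  have hax := Hderiv.ax3 (n := n) (Γ := Γ) (Fml.and φ ψ) φ
  exact .mp hax (l2 φ ψ.negF)

theorem andE2 {Γ : Set (Fml m)} (φ ψ : Fml m) :
    Hderiv n m Γ ((Fml.and φ ψ).impF ψ) := by
  have hax := Hderiv.ax3 (n := n) (Γ := Γ) (Fml.and φ ψ) ψ
  exact .mp hax (.ax1 ψ.negF φ)

theorem negF_impF_negF (φ ψ : Fml m) :
    (φ.impF ψ.negF).negF = Fml.and φ ψ := by
  simp [Fml.impF, Fml.negF, Fml.negF_negF]

theorem andI {Γ : Set (Fml m)} {φ ψ : Fml m} (h1 : Hderiv n m Γ φ) (h2 : Hderiv n m Γ ψ) :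
    Hderiv n m Γ (Fml.and φ ψ) := by
  rw [← negF_impF_negF φ ψ]
  refine .mp (reductio _) (ded (absurdR (φ := ψ) _ ?_ ?_))
  · exact .mp (prem0 _) (wk1 h1)
  · exact wk1 h2

theorem or_eq_impF (φ ψ : Fml m) : φ.negF.impF ψ = Fml.or φ ψ := by
  simp [Fml.impF, Fml.negF_negF]

theorem orI1 {Γ : Set (Fml m)} (φ ψ : Fml m) : Hderiv n m Γ (φ.impF (Fml.or φ ψ)) := by
  rw [← or_eq_impF]
  exact ded (ded (absurdR _ (prem0 _) (wk1 (prem0 _))))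

theorem orI2 {Γ : Set (Fml m)} (φ ψ : Fml m) : Hderiv n m Γ (ψ.impF (Fml.or φ ψ)) := by
  rw [← or_eq_impF]
  exact .ax1 ψ φ.negF

theorem orE {Γ : Set (Fml m)} {φ ψ χ : Fml m} (h1 : Hderiv n m Γ (φ.impF χ))
    (h2 : Hderiv n m Γ (ψ.impF χ)) : Hderiv n m Γ ((Fml.or φ ψ).impF χ) := by
  rw [← or_eq_impF]
  refine ded (.mp (clavius χ) (ded ?_))
  -- context : insert ¬χ (insert (¬φ → ψ) Γ) ⊢ χ
  have hnφ : Hderiv n m (insert χ.negF (insert (φ.negF.impF ψ) Γ)) φ.negF :=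
    .mp (wk1 (wk1 (contrap h1))) (prem0 _)
  have hψ : Hderiv n m (insert χ.negF (insert (φ.negF.impF ψ) Γ)) ψ :=
    .mp (wk1 (prem0 _)) hnφ
  exact .mp (wk1 (wk1 h2)) hψ

theorem em {Γ : Set (Fml m)} (φ : Fml m) : Hderiv n m Γ (Fml.or φ φ.negF) := by
  rw [← or_eq_impF]
  exact impId _

theorem byCases {Γ : Set (Fml m)} {φ χ : Fml m} (h1 : Hderiv n m Γ (φ.impF χ))
    (h2 : Hderiv n m Γ (φ.negF.impF χ)) : Hderiv n m Γ χ :=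
  .mp (orE h1 h2) (em φ)

/-- falsum -/
def fbot (m : ℕ) : Fml m := Fml.and (Fml.pos 0) (Fml.neg 0)

theorem botE {Γ : Set (Fml m)} (ψ : Fml m) : Hderiv n m Γ ((fbot m).impF ψ) := by
  refine ded (absurdR (φ := Fml.pos 0) _ ?_ ?_)
  · exact .mp (andE2 _ _) (prem0 _)
  · exact .mp (andE1 _ _) (prem0 _)

theorem notBot {Γ : Set (Fml m)} : Hderiv n m Γ (fbot m).negF := by
  show Hderiv n m Γ (Fml.or (Fml.neg 0) (Fml.pos 0))
  rw [show Fml.or (Fml.neg 0) (Fml.pos 0) = Fml.or ((Fml.pos 0 : Fml m)).negF (Fml.pos 0) from rfl]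
  rw [← Fml.impF]
  exact impId _

theorem negI {Γ : Set (Fml m)} {φ : Fml m} (h : Hderiv n m Γ (φ.impF (fbot m))) :
    Hderiv n m Γ φ.negF := by
  exact .mp (contrap h) notBot

end Hilbert

open Classical

section Modal
variable {n m : ℕ}

theorem boxMono {Γ : Set (Fml m)} {φ ψ : Fml m} (h : Hderiv n m ∅ (φ.impF ψ)) :
    Hderiv n m Γ ((Fml.box φ).impF (Fml.box ψ)) :=
  .mp (.boxK φ ψ) (.nec h)

theorem agNec {Γ : Set (Fml m)} {φ : Fml m} (i : Fin m) (h : Hderiv n m ∅ φ) :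
    Hderiv n m Γ (Fml.ag i φ) :=
  .mp (.bridge i φ) (.nec h)

theorem agMono {Γ : Set (Fml m)} {φ ψ : Fml m} (i : Fin m) (h : Hderiv n m ∅ (φ.impF ψ)) :
    Hderiv n m Γ ((Fml.ag i φ).impF (Fml.ag i ψ)) :=
  .mp (.agK i φ ψ) (agNec i h)

/-- `φ → ◇φ` -/
theorem diaT {Γ : Set (Fml m)} (φ : Fml m) : Hderiv n m Γ (φ.impF (Fml.dia φ)) := by
  have h := contrap (Hderiv.boxT (n := n) (Γ := Γ) φ.negF)
  simp only [Fml.negF, Fml.negF_negF] at h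
  exact h

/-- `φ → □◇φ` -/
theorem boxB {Γ : Set (Fml m)} (φ : Fml m) :
    Hderiv n m Γ (φ.impF (Fml.box (Fml.dia φ))) :=
  hsyl (diaT φ) (.box5 φ)

/-- `◇□χ → χ` -/
theorem diaBoxE {Γ : Set (Fml m)} (χ : Fml m) :
    Hderiv n m Γ ((Fml.dia (Fml.box χ)).impF χ) := by
  have h := contrap (boxB (n := n) (Γ := Γ) χ.negF)
  simp only [Fml.negF, Fml.negF_negF] at h
  exact h

theorem diaMono {Γ : Set (Fml m)} {φ ψ : Fml m} (h : Hderiv n m ∅ (φ.impF ψ)) :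
    Hderiv n m Γ ((Fml.dia φ).impF (Fml.dia ψ)) := by
  have h2 : Hderiv n m Γ ((Fml.box ψ.negF).impF (Fml.box φ.negF)) := boxMono (contrap h)
  have h3 := contrap h2
  simp only [Fml.negF, Fml.negF_negF] at h3
  exact h3

/-- `◇◇ψ → ◇ψ` -/
theorem diaDia {Γ : Set (Fml m)} (ψ : Fml m) :
    Hderiv n m Γ ((Fml.dia (Fml.dia ψ)).impF (Fml.dia ψ)) :=
  hsyl (diaMono (.box5 ψ)) (diaBoxE (Fml.dia ψ))

/-- `□φ → □□φ` -/
theorem box4 {Γ : Set (Fml m)} (φ : Fml m) :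
    Hderiv n m Γ ((Fml.box φ).impF (Fml.box (Fml.box φ))) :=
  .mp (.ax3 (Fml.box φ) (Fml.box (Fml.box φ))) (diaDia φ.negF)

/-- `φ → ⟨i⟩φ` -/
theorem dagT {Γ : Set (Fml m)} (i : Fin m) (φ : Fml m) :
    Hderiv n m Γ (φ.impF (Fml.dag i φ)) := by
  have h := contrap (Hderiv.agT (n := n) (Γ := Γ) i φ.negF)
  simp only [Fml.negF, Fml.negF_negF] at h
  exact h

/-- `φ → [i]⟨i⟩φ` -/
theorem agB {Γ : Set (Fml m)} (i : Fin m) (φ : Fml m) :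
    Hderiv n m Γ (φ.impF (Fml.ag i (Fml.dag i φ))) :=
  hsyl (dagT i φ) (.ag5 i φ)

/-- `⟨i⟩[i]χ → χ` -/
theorem dagAgE {Γ : Set (Fml m)} (i : Fin m) (χ : Fml m) :
    Hderiv n m Γ ((Fml.dag i (Fml.ag i χ)).impF χ) := by
  have h := contrap (agB (n := n) (Γ := Γ) i χ.negF)
  simp only [Fml.negF, Fml.negF_negF] at h
  exact h

theorem dagMono {Γ : Set (Fml m)} {φ ψ : Fml m} (i : Fin m) (h : Hderiv n m ∅ (φ.impF ψ)) :
    Hderiv n m Γ ((Fml.dag i φ).impF (Fml.dag i ψ)) := by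
  have h2 : Hderiv n m Γ ((Fml.ag i ψ.negF).impF (Fml.ag i φ.negF)) := agMono i (contrap h)
  have h3 := contrap h2
  simp only [Fml.negF, Fml.negF_negF] at h3
  exact h3

/-- `⟨i⟩⟨i⟩ψ → ⟨i⟩ψ` -/
theorem dagDag {Γ : Set (Fml m)} (i : Fin m) (ψ : Fml m) :
    Hderiv n m Γ ((Fml.dag i (Fml.dag i ψ)).impF (Fml.dag i ψ)) :=
  hsyl (dagMono i (.ag5 i ψ)) (dagAgE i (Fml.dag i ψ))

/-- `[i]φ → [i][i]φ` -/
theorem ag4 {Γ : Set (Fml m)} (i : Fin m) (φ : Fml m) :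
    Hderiv n m Γ ((Fml.ag i φ).impF (Fml.ag i (Fml.ag i φ))) :=
  .mp (.ax3 (Fml.ag i φ) (Fml.ag i (Fml.ag i φ))) (dagDag i φ.negF)

/-! ### finite conjunctions -/

def listConj {m : ℕ} : List (Fml m) → Fml m
  | [] => (fbot m).negF
  | φ :: l => Fml.and φ (listConj l)

theorem conjE {Γ : Set (Fml m)} {L : List (Fml m)} {φ : Fml m} (h : φ ∈ L) :
    Hderiv n m Γ ((listConj L).impF φ) := by
  induction L with
  | nil => cases h
  | cons ψ l ih =>
    rcases List.mem_cons.mp h with rfl | h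
    · exact andE1 _ _
    · exact hsyl (andE2 _ _) (ih h)

theorem conjI {Γ : Set (Fml m)} {L : List (Fml m)} (h : ∀ φ ∈ L, Hderiv n m Γ φ) :
    Hderiv n m Γ (listConj L) := by
  induction L with
  | nil => exact notBot
  | cons ψ l ih =>
    exact andI (h ψ (by simp)) (ih (fun φ hφ => h φ (by simp [hφ])))

theorem dedList {Γ : Set (Fml m)} {ψ : Fml m} : ∀ {L : List (Fml m)},
    Hderiv n m (Γ ∪ {φ | φ ∈ L}) ψ → Hderiv n m Γ ((listConj L).impF ψ) := by
  intro L
  induction L generalizing ψ with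
  | nil =>
    intro h
    rw [show ({φ | φ ∈ ([] : List (Fml m))} : Set (Fml m)) = ∅ by simp] at h
    rw [Set.union_empty] at h
    exact .mp (.ax1 ψ _) h
  | cons φ l ih =>
    intro h
    have hset : Γ ∪ {χ | χ ∈ φ :: l} = insert φ (Γ ∪ {χ | χ ∈ l}) := by
      ext x; simp [List.mem_cons]; tauto
    rw [hset] at h
    have ih2 := ih (ded h)
    -- ih2 : conj l → (φ → ψ)
    refine ded ?_
    have hφ : Hderiv n m (insert (listConj (φ :: l)) Γ) φ :=
      .mp (andE1 _ _) (prem0 _)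
    have hl : Hderiv n m (insert (listConj (φ :: l)) Γ) (listConj l) :=
      .mp (andE2 _ _) (prem0 _)
    exact .mp (.mp (wk1 ih2) hl) hφ

theorem boxListConj {Γ : Set (Fml m)} (L : List (Fml m)) :
    Hderiv n m Γ ((listConj (L.map Fml.box)).impF (Fml.box (listConj L))) := by
  induction L with
  | nil =>
    exact .mp (.ax1 _ _) (.nec notBot)
  | cons φ l ih =>
    refine ded ?_
    have h1 : Hderiv n m (insert (listConj ((φ :: l).map Fml.box)) Γ) (Fml.box φ) :=
      .mp (andE1 _ _) (prem0 _)
    have h2 : Hderiv n m (insert (listConj ((φ :: l).map Fml.box)) Γ)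
        (listConj (l.map Fml.box)) :=
      .mp (andE2 _ _) (prem0 _)
    have h3 := Hderiv.mp (wk1 ih) h2
    have hpair : Hderiv n m (∅ : Set (Fml m)) (φ.impF ((listConj l).impF (listConj (φ :: l)))) :=
      ded (ded (andI (wk1 (prem0 _)) (prem0 _)))
    have h4 := Hderiv.mp (boxMono (Γ := insert (listConj ((φ :: l).map Fml.box)) Γ) hpair) h1
    exact .mp (.mp (.boxK _ _) h4) h3

theorem agListConj {Γ : Set (Fml m)} (i : Fin m) (L : List (Fml m)) :
    Hderiv n m Γ ((listConj (L.map (Fml.ag i))).impF (Fml.ag i (listConj L))) := by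
  induction L with
  | nil =>
    exact .mp (.ax1 _ _) (agNec i notBot)
  | cons φ l ih =>
    refine ded ?_
    have h1 : Hderiv n m (insert (listConj ((φ :: l).map (Fml.ag i))) Γ) (Fml.ag i φ) :=
      .mp (andE1 _ _) (prem0 _)
    have h2 : Hderiv n m (insert (listConj ((φ :: l).map (Fml.ag i))) Γ)
        (listConj (l.map (Fml.ag i))) :=
      .mp (andE2 _ _) (prem0 _)
    have h3 := Hderiv.mp (wk1 ih) h2
    have hpair : Hderiv n m (∅ : Set (Fml m)) (φ.impF ((listConj l).impF (listConj (φ :: l)))) :=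
      ded (ded (andI (wk1 (prem0 _)) (prem0 _)))
    have h4 := Hderiv.mp (agMono (Γ := insert (listConj ((φ :: l).map (Fml.ag i))) Γ) i hpair) h1
    exact .mp (.mp (.agK i _ _) h4) h3

/-! ### compactness -/

theorem hderiv_compact {Γ : Set (Fml m)} {φ : Fml m} (h : Hderiv n m Γ φ) :
    ∃ L : List (Fml m), (∀ ψ ∈ L, ψ ∈ Γ) ∧ Hderiv n m {ψ | ψ ∈ L} φ := by
  induction h with
  | @prem _ χ h => exact ⟨[χ], by simp [h], .prem (by simp)⟩
  | ax1 φ ψ => exact ⟨[], by simp, .ax1 φ ψ⟩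
  | ax2 φ ψ χ => exact ⟨[], by simp, .ax2 φ ψ χ⟩
  | ax3 φ ψ => exact ⟨[], by simp, .ax3 φ ψ⟩
  | boxK φ ψ => exact ⟨[], by simp, .boxK φ ψ⟩
  | boxT φ => exact ⟨[], by simp, .boxT φ⟩
  | box5 φ => exact ⟨[], by simp, .box5 φ⟩
  | boxDual φ => exact ⟨[], by simp, .boxDual φ⟩
  | agK i φ ψ => exact ⟨[], by simp, .agK i φ ψ⟩
  | agT i φ => exact ⟨[], by simp, .agT i φ⟩
  | ag5 i φ => exact ⟨[], by simp, .ag5 i φ⟩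
  | agDual i φ => exact ⟨[], by simp, .agDual i φ⟩
  | bridge i φ => exact ⟨[], by simp, .bridge i φ⟩
  | ioa f => exact ⟨[], by simp, .ioa f⟩
  | apc hn i f => exact ⟨[], by simp, .apc hn i f⟩
  | mp h1 h2 ih1 ih2 =>
    obtain ⟨L1, hL1, d1⟩ := ih1
    obtain ⟨L2, hL2, d2⟩ := ih2
    refine ⟨L1 ++ L2, ?_, ?_⟩
    · intro ψ hψ
      rcases List.mem_append.mp hψ with h | h
      · exact hL1 ψ h
      · exact hL2 ψ h
    · exact .mp (d1.mono (by intro x hx; simp_all)) (d2.mono (by intro x hx; simp_all))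
  | nec h _ => exact ⟨[], by simp, .nec h⟩

end Modal

open Classical

section MCS
variable {n m : ℕ}

def Con (n m : ℕ) (Γ : Set (Fml m)) : Prop := ¬ Hderiv n m Γ (fbot m)

def MCS (n m : ℕ) (Γ : Set (Fml m)) : Prop :=
  Con n m Γ ∧ ∀ φ : Fml m, φ ∈ Γ ∨ φ.negF ∈ Γ

theorem mcs_thm {Γ : Set (Fml m)} (hM : MCS n m Γ) {φ : Fml m} (h : Hderiv n m Γ φ) :
    φ ∈ Γ := by
  rcases hM.2 φ with hmem | hmem
  · exact hmem
  · exact absurd (absurdR (fbot m) (.prem hmem) h) hM.1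

theorem mcs_mp {Γ : Set (Fml m)} (hM : MCS n m Γ) {φ ψ : Fml m}
    (h1 : φ.impF ψ ∈ Γ) (h2 : φ ∈ Γ) : ψ ∈ Γ :=
  mcs_thm hM (.mp (.prem h1) (.prem h2))

theorem mcs_not {Γ : Set (Fml m)} (hM : MCS n m Γ) {φ : Fml m} :
    φ ∉ Γ ↔ φ.negF ∈ Γ := by
  constructor
  · intro h
    rcases hM.2 φ with h' | h'
    · exact absurd h' h
    · exact h'
  · intro h hmem
    exact hM.1 (absurdR (fbot m) (.prem h) (.prem hmem))

theorem mcs_and {Γ : Set (Fml m)} (hM : MCS n m Γ) {φ ψ : Fml m} :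
    Fml.and φ ψ ∈ Γ ↔ φ ∈ Γ ∧ ψ ∈ Γ := by
  constructor
  · intro h
    exact ⟨mcs_thm hM (.mp (andE1 _ _) (.prem h)), mcs_thm hM (.mp (andE2 _ _) (.prem h))⟩
  · rintro ⟨h1, h2⟩
    exact mcs_thm hM (andI (.prem h1) (.prem h2))

theorem mcs_or {Γ : Set (Fml m)} (hM : MCS n m Γ) {φ ψ : Fml m} :
    Fml.or φ ψ ∈ Γ ↔ φ ∈ Γ ∨ ψ ∈ Γ := by
  constructor
  · intro h
    by_contra hc
    push_neg at hc
    have hnφ : φ.negF ∈ Γ := (mcs_not hM).mp hc.1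
    have hnψ : ψ.negF ∈ Γ := (mcs_not hM).mp hc.2
    have hψ : Hderiv n m Γ ψ := by
      refine .mp (orE ?_ (impId ψ)) (.prem h)
      exact ded (absurdR ψ (wk1 (.prem hnφ)) (prem0 φ))
    exact hM.1 (absurdR (fbot m) (.prem hnψ) hψ)
  · rintro (h | h)
    · exact mcs_thm hM (.mp (orI1 _ _) (.prem h))
    · exact mcs_thm hM (.mp (orI2 _ _) (.prem h))

theorem list_in_directed {c : Set (Set (Fml m))} (hd : DirectedOn (· ⊆ ·) c)
    {Δ0 : Set (Fml m)} (h0 : Δ0 ∈ c) :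
    ∀ L : List (Fml m), (∀ ψ ∈ L, ψ ∈ ⋃₀ c) → ∃ Δ ∈ c, ∀ ψ ∈ L, ψ ∈ Δ := by
  intro L
  induction L with
  | nil => exact fun _ => ⟨Δ0, h0, by simp⟩
  | cons φ l ih =>
    intro h
    obtain ⟨Δ1, hΔ1, hl⟩ := ih (fun ψ hψ => h ψ (by simp [hψ]))
    obtain ⟨Δ2, hΔ2, hφ⟩ := h φ (by simp)
    obtain ⟨Δ3, hΔ3, h13, h23⟩ := hd Δ1 hΔ1 Δ2 hΔ2
    exact ⟨Δ3, hΔ3, fun ψ hψ => by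
      rcases List.mem_cons.mp hψ with rfl | hψ
      · exact h23 hφ
      · exact h13 (hl ψ hψ)⟩

theorem lindenbaum {Γ : Set (Fml m)} (h : Con n m Γ) :
    ∃ Δ, Γ ⊆ Δ ∧ MCS n m Δ := by
  have hZ : ∀ c ⊆ {Δ : Set (Fml m) | Con n m Δ}, IsChain (· ⊆ ·) c → c.Nonempty →
      ∃ ub ∈ {Δ : Set (Fml m) | Con n m Δ}, ∀ s ∈ c, s ⊆ ub := by
    intro c hc hchain hne
    obtain ⟨Δ0, hΔ0⟩ := hne
    refine ⟨⋃₀ c, ?_, fun s hs => Set.subset_sUnion_of_mem hs⟩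
    intro hbot
    obtain ⟨L, hL, hd⟩ := hderiv_compact hbot
    obtain ⟨Δ, hΔc, hLΔ⟩ := list_in_directed hchain.directedOn hΔ0 L hL
    exact hc hΔc (hd.mono (fun x hx => hLΔ x hx))
  obtain ⟨Δ, hsub, hmax⟩ := zorn_subset_nonempty {Δ : Set (Fml m) | Con n m Δ} hZ Γ h
  refine ⟨Δ, hsub, hmax.1, ?_⟩
  intro φ
  by_contra hc
  push_neg at hc
  have key : Con n m (insert φ Δ) ∨ Con n m (insert φ.negF Δ) := by
    by_contra hc2
    push_neg at hc2
    rw [Con, not_not, Con, not_not] at hc2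
    exact hmax.1 (byCases (ded hc2.1) (ded hc2.2))
  rcases key with hk | hk
  · exact hc.1 (hmax.2 hk (Set.subset_insert _ _) (Set.mem_insert _ _))
  · exact hc.2 (hmax.2 hk (Set.subset_insert _ _) (Set.mem_insert _ _))

theorem mcs_closed_list {Γ : Set (Fml m)} (hM : MCS n m Γ) {L : List (Fml m)}
    (h : ∀ ψ ∈ L, ψ ∈ Γ) : listConj L ∈ Γ :=
  mcs_thm hM (conjI (fun φ hφ => .prem (h φ hφ)))

/-- a set all of whose finite subsets entail nothing false is consistent;
stated via the needed form: if the set `{ψ̄}∪ S` is inconsistent then some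
finite list from `S` yields `⊢ conj L → ψ` -/
theorem incon_finite {S : Set (Fml m)} {χ : Fml m}
    (h : ¬ Con n m (insert χ S)) :
    ∃ L : List (Fml m), (∀ ψ ∈ L, ψ ∈ S) ∧ Hderiv n m ∅ ((listConj L).impF χ.negF) := by
  rw [Con, not_not] at h
  obtain ⟨L, hL, hd⟩ := hderiv_compact h
  -- remove χ from L's role by deduction
  have hsub : ({ψ | ψ ∈ L} : Set (Fml m)) ⊆ insert χ {ψ | ψ ∈ L.filter (· ≠ χ)} := by
    intro x hx
    by_cases hxχ : x = χ
    · simp [hxχ]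
    · right
      simp only [Set.mem_setOf_eq, List.mem_filter]
      exact ⟨hx, by simp [hxχ]⟩
  have hd2 : Hderiv n m (insert χ {ψ | ψ ∈ L.filter (· ≠ χ)}) (fbot m) := hd.mono hsub
  have hd3 : Hderiv n m {ψ | ψ ∈ L.filter (· ≠ χ)} (χ.impF (fbot m)) := ded hd2
  have hd4 : Hderiv n m {ψ | ψ ∈ L.filter (· ≠ χ)} χ.negF := negI hd3
  refine ⟨L.filter (· ≠ χ), ?_, ?_⟩
  · intro ψ hψ
    have := List.mem_filter.mp hψ
    have hmem := hL ψ this.1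
    rcases hmem with h' | h'
    · exact absurd h' (by simpa using this.2)
    · exact h'
  · have : ({ψ | ψ ∈ L.filter (· ≠ χ)} : Set (Fml m)) =
        ∅ ∪ {ψ | ψ ∈ L.filter (· ≠ χ)} := by simp
    rw [this] at hd4
    exact dedList hd4

end MCS

open Classical

section Canon
variable {n m : ℕ}

/-- the canonical cluster determined by an MCS `Δ0` -/
def CW (n m : ℕ) (Δ0 : Set (Fml m)) : Set (Set (Fml m)) :=
  {Δ | MCS n m Δ ∧ ∀ χ : Fml m, Fml.box χ ∈ Δ0 → Fml.box χ ∈ Δ}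

variable {Δ0 : Set (Fml m)}

theorem cw_self (hΔ0 : MCS n m Δ0) : Δ0 ∈ CW n m Δ0 := ⟨hΔ0, fun _ h => h⟩

theorem box_transfer (hΔ0 : MCS n m Δ0) {Δ : Set (Fml m)} (hΔ : Δ ∈ CW n m Δ0) (χ : Fml m) :
    Fml.box χ ∈ Δ ↔ Fml.box χ ∈ Δ0 := by
  constructor
  · intro h
    by_contra hc
    have h1 : Fml.dia χ.negF ∈ Δ0 := (mcs_not hΔ0).mp hc
    have h2 : Fml.box (Fml.dia χ.negF) ∈ Δ0 := mcs_mp hΔ0 (mcs_thm hΔ0 (.box5 _)) h1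
    have h3 : Fml.box (Fml.dia χ.negF) ∈ Δ := hΔ.2 _ h2
    have h4 : Fml.dia χ.negF ∈ Δ := mcs_mp hΔ.1 (mcs_thm hΔ.1 (.boxT _)) h3
    exact (mcs_not hΔ.1 (φ := Fml.box χ)).mpr h4 h
  · exact hΔ.2 χ

theorem unbox_mem (hΔ0 : MCS n m Δ0) {Δ : Set (Fml m)} (hΔ : Δ ∈ CW n m Δ0) {χ : Fml m}
    (h : Fml.box χ ∈ Δ0) : χ ∈ Δ :=
  mcs_mp hΔ.1 (mcs_thm hΔ.1 (.boxT _)) (hΔ.2 _ h)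

theorem dia_transfer (hΔ0 : MCS n m Δ0) {Δ : Set (Fml m)} (hΔ : Δ ∈ CW n m Δ0) {χ : Fml m}
    (h : χ ∈ Δ) : Fml.dia χ ∈ Δ0 := by
  by_contra hc
  have h1 : Fml.box χ.negF ∈ Δ0 := (mcs_not hΔ0).mp hc
  exact (mcs_not hΔ.1).mpr ((unbox_mem hΔ0 hΔ h1 : χ.negF ∈ Δ)) h

theorem dia_mem_iff (hΔ0 : MCS n m Δ0) {Δ : Set (Fml m)} (hΔ : Δ ∈ CW n m Δ0) (χ : Fml m) :
    Fml.dia χ ∈ Δ ↔ Fml.dia χ ∈ Δ0 := by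
  have hb := box_transfer hΔ0 hΔ χ.negF
  constructor
  · intro h
    by_contra hc
    have : Fml.box χ.negF ∈ Δ0 := by
      have := (mcs_not hΔ0).mp hc
      simpa [Fml.negF] using this
    exact (mcs_not hΔ.1).mpr (by simpa [Fml.negF] using hb.mpr this) h
  · intro h
    by_contra hc
    have : Fml.box χ.negF ∈ Δ := by
      have := (mcs_not hΔ.1).mp hc
      simpa [Fml.negF] using this
    exact (mcs_not hΔ0).mpr (by simpa [Fml.negF] using hb.mp this) h

/-- extract the list of unboxed formulas -/
theorem all_boxes {Δ0 : Set (Fml m)} :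
    ∀ L : List (Fml m), (∀ α ∈ L, ∃ χ, α = Fml.box χ ∧ Fml.box χ ∈ Δ0) →
      ∃ L' : List (Fml m), L = L'.map Fml.box ∧ ∀ χ ∈ L', Fml.box χ ∈ Δ0 := by
  intro L
  induction L with
  | nil => exact fun _ => ⟨[], rfl, by simp⟩
  | cons α l ih =>
    intro h
    obtain ⟨χ, rfl, hχ⟩ := h α (by simp)
    obtain ⟨L', rfl, hL'⟩ := ih (fun β hβ => h β (by simp [hβ]))
    refine ⟨χ :: L', by simp, ?_⟩
    intro χ' hχ'
    rcases List.mem_cons.mp hχ' with rfl | hχ'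
    · exact hχ
    · exact hL' χ' hχ'

/-- existence of a `◇`-witness world in the cluster -/
theorem dia_witness (hΔ0 : MCS n m Δ0) {Δ : Set (Fml m)} (hΔ : Δ ∈ CW n m Δ0) {ψ : Fml m}
    (h : Fml.dia ψ ∈ Δ) : ∃ Θ ∈ CW n m Δ0, ψ ∈ Θ := by
  set S : Set (Fml m) := {χ | ∃ χ', χ = Fml.box χ' ∧ Fml.box χ' ∈ Δ0} with hS
  have hcon : Con n m (insert ψ S) := by
    intro hbot
    obtain ⟨L, hL, hd⟩ := incon_finite (by rw [Con, not_not]; exact hbot)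
    obtain ⟨L', rfl, hL'⟩ := all_boxes L hL
    -- `⊢ conj (map box L') → ¬ψ`, hence `□conj(map box L') → □¬ψ` in `Δ`
    have h1 : ∀ χ ∈ L', Fml.box (Fml.box χ) ∈ Δ :=
      fun χ hχ => (box_transfer hΔ0 hΔ _).mpr
        (mcs_mp hΔ0 (mcs_thm hΔ0 (box4 χ)) (hL' χ hχ))
    have h2 : listConj ((L'.map Fml.box).map Fml.box) ∈ Δ := by
      refine mcs_closed_list hΔ.1 ?_
      intro α hα
      simp only [List.map_map, List.mem_map] at hα
      obtain ⟨χ, hχ, rfl⟩ := hα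
      exact h1 χ hχ
    have h3 : Fml.box (listConj (L'.map Fml.box)) ∈ Δ :=
      mcs_mp hΔ.1 (mcs_thm hΔ.1 (boxListConj (L'.map Fml.box))) h2
    have h4 : Fml.box ψ.negF ∈ Δ :=
      mcs_mp hΔ.1 (mcs_thm hΔ.1 (boxMono hd)) h3
    exact (mcs_not hΔ.1 (φ := Fml.dia ψ)).mpr h4 h
  obtain ⟨Θ, hsub, hΘ⟩ := lindenbaum hcon
  refine ⟨Θ, ⟨hΘ, fun χ hχ => hsub (Set.mem_insert_of_mem _ ⟨χ, rfl, hχ⟩)⟩,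
    hsub (Set.mem_insert _ _)⟩

/-- canonical relation for agent `i` -/
def Rc (i : Fin m) (Δ Θ : Set (Fml m)) : Prop := ∀ χ : Fml m, Fml.ag i χ ∈ Δ → χ ∈ Θ

theorem rc_refl {Δ : Set (Fml m)} (hΔ : MCS n m Δ) (i : Fin m) : Rc i Δ Δ :=
  fun χ h => mcs_mp hΔ (mcs_thm hΔ (.agT i χ)) h

theorem rc_symm {Δ Θ : Set (Fml m)} (hΔ : MCS n m Δ) (hΘ : MCS n m Θ) {i : Fin m}
    (h : Rc i Δ Θ) : Rc i Θ Δ := by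
  intro χ hχ
  by_contra hc
  have h1 : χ.negF ∈ Δ := (mcs_not hΔ).mp hc
  have h2 : Fml.ag i (Fml.dag i χ.negF) ∈ Δ := mcs_mp hΔ (mcs_thm hΔ (agB i χ.negF)) h1
  have h3 : Fml.dag i χ.negF ∈ Θ := h _ h2
  exact (mcs_not hΘ (φ := Fml.ag i χ)).mpr h3 hχ

theorem rc_trans {Δ Θ Ξ : Set (Fml m)} (hΔ : MCS n m Δ) {i : Fin m}
    (h1 : Rc i Δ Θ) (h2 : Rc i Θ Ξ) : Rc i Δ Ξ := by
  intro χ hχ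
  exact h2 χ (h1 _ (mcs_mp hΔ (mcs_thm hΔ (ag4 i χ)) hχ))

/-- existence of a `⟨i⟩`-witness world -/
theorem dag_witness (hΔ0 : MCS n m Δ0) {Δ : Set (Fml m)} (hΔ : Δ ∈ CW n m Δ0) {i : Fin m} {ψ : Fml m}
    (h : Fml.dag i ψ ∈ Δ) : ∃ Θ ∈ CW n m Δ0, Rc i Δ Θ ∧ ψ ∈ Θ := by
  set S : Set (Fml m) := {χ | Fml.ag i χ ∈ Δ} with hS
  have hcon : Con n m (insert ψ S) := by
    intro hbot
    obtain ⟨L, hL, hd⟩ := incon_finite (by rw [Con, not_not]; exact hbot)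
    have h2 : listConj (L.map (Fml.ag i)) ∈ Δ := by
      refine mcs_closed_list hΔ.1 ?_
      intro α hα
      simp only [List.mem_map] at hα
      obtain ⟨χ, hχ, rfl⟩ := hα
      exact hL χ hχ
    have h3 : Fml.ag i (listConj L) ∈ Δ :=
      mcs_mp hΔ.1 (mcs_thm hΔ.1 (agListConj i L)) h2
    have h4 : Fml.ag i ψ.negF ∈ Δ :=
      mcs_mp hΔ.1 (mcs_thm hΔ.1 (agMono i hd)) h3
    exact (mcs_not hΔ.1 (φ := Fml.dag i ψ)).mpr h4 h
  obtain ⟨Θ, hsub, hΘ⟩ := lindenbaum hcon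
  refine ⟨Θ, ⟨hΘ, ?_⟩, fun χ hχ => hsub (Set.mem_insert_of_mem _ hχ), hsub (Set.mem_insert _ _)⟩
  intro χ hχ
  have hbb : Fml.box (Fml.box χ) ∈ Δ :=
    (box_transfer hΔ0 hΔ _).mpr (mcs_mp hΔ0 (mcs_thm hΔ0 (box4 χ)) hχ)
  have hag : Fml.ag i (Fml.box χ) ∈ Δ :=
    mcs_mp hΔ.1 (mcs_thm hΔ.1 (.bridge i (Fml.box χ))) hbb
  exact hsub (Set.mem_insert_of_mem _ hag)

theorem mcs_conjUpTo {Γ : Set (Fml m)} (hM : MCS n m Γ) (f : ℕ → Fml m) (k : ℕ) :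
    conjUpTo f k ∈ Γ ↔ ∀ j ≤ k, f j ∈ Γ := by
  induction k with
  | zero => simp [conjUpTo]
  | succ k ih =>
    rw [conjUpTo, mcs_and hM, ih]
    constructor
    · rintro ⟨h1, h2⟩ j hj
      by_cases hjk : j = k + 1
      · exact hjk ▸ h2
      · exact h1 j (by omega)
    · intro h
      exact ⟨fun j hj => h j (by omega), h _ le_rfl⟩

theorem mcs_disjUpTo {Γ : Set (Fml m)} (hM : MCS n m Γ) (f : ℕ → Fml m) (k : ℕ) :
    disjUpTo f k ∈ Γ ↔ ∃ j ≤ k, f j ∈ Γ := by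
  induction k with
  | zero => simp [disjUpTo]
  | succ k ih =>
    rw [disjUpTo, mcs_or hM, ih]
    constructor
    · rintro (⟨j, hj, h⟩ | h)
      · exact ⟨j, by omega, h⟩
      · exact ⟨k+1, le_rfl, h⟩
    · rintro ⟨j, hj, h⟩
      by_cases hjk : j = k + 1
      · exact Or.inr (hjk ▸ h)
      · exact Or.inl ⟨j, by omega, h⟩

theorem mcs_prefNegConj {Γ : Set (Fml m)} (hM : MCS n m Γ) (f : ℕ → Fml m) (j : ℕ)
    (base : Fml m) :
    prefNegConj f j base ∈ Γ ↔ ((∀ l < j, (f l).negF ∈ Γ) ∧ base ∈ Γ) := by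
  induction j generalizing base with
  | zero => simp [prefNegConj]
  | succ j ih =>
    rw [prefNegConj, ih, mcs_and hM]
    constructor
    · rintro ⟨h1, h2, h3⟩
      refine ⟨fun l hl => ?_, h3⟩
      by_cases hlj : l = j
      · exact hlj ▸ h2
      · exact h1 l (by omega)
    · rintro ⟨h1, h2⟩
      exact ⟨fun l hl => h1 l (by omega), h1 j (by omega), h2⟩

end Canon

open Classical

section Canon2
variable {n m : ℕ} {Δ0 : Set (Fml m)}

theorem conjUpToE {Γ : Set (Fml m)} {f : ℕ → Fml m} {k : ℕ}
    (h : Hderiv n m Γ (conjUpTo f k)) : ∀ j ≤ k, Hderiv n m Γ (f j) := by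
  induction k with
  | zero =>
    intro j hj
    interval_cases j
    exact h
  | succ k ih =>
    intro j hj
    by_cases hjk : j = k + 1
    · subst hjk
      exact .mp (andE2 _ _) h
    · exact ih (.mp (andE1 _ _) h) j (by omega)

theorem canon_ioa (hm : 0 < m) (hΔ0 : MCS n m Δ0) (u : Fin m → Set (Fml m))
    (hu : ∀ i, u i ∈ CW n m Δ0) :
    ∃ v ∈ CW n m Δ0, ∀ i, Rc i (u i) v := by
  set S : Set (Fml m) := {χ | ∃ i, Fml.ag i χ ∈ u i} with hSdef
  have hcon : Con n m S := by
    intro hbot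
    obtain ⟨L, hL, hd⟩ := hderiv_compact hbot
    set g : Fml m → Fin m := fun χ =>
      if h : ∃ i, Fml.ag i χ ∈ u i then choose h else ⟨0, hm⟩ with hgdef
    have hg : ∀ χ ∈ L, Fml.ag (g χ) χ ∈ u (g χ) := by
      intro χ hχ
      have hex : ∃ i, Fml.ag i χ ∈ u i := hL χ hχ
      simp only [hgdef, dif_pos hex]
      exact choose_spec hex
    set f : Fin m → Fml m := fun i => listConj (L.filter (fun χ => g χ = i)) with hfdef
    have h1 : ∀ i, Fml.ag i (f i) ∈ u i := by
      intro i
      refine mcs_mp (hu i).1 (mcs_thm (hu i).1 (agListConj i _)) ?_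
      refine mcs_closed_list (hu i).1 ?_
      intro α hα
      simp only [List.mem_map] at hα
      obtain ⟨χ, hχ, rfl⟩ := hα
      have hmem := List.mem_filter.mp hχ
      have hgi : g χ = i := by simpa using hmem.2
      have := hg χ hmem.1
      rwa [hgi] at this
    set β : Fml m := conjUpTo (agIdx f) (m-1) with hβdef
    have hLder : ∀ χ ∈ L, Hderiv n m {β} χ := by
      intro χ hχ
      have hfi : Hderiv n m {β} (agIdx f (g χ).val) := by
        have hβ : Hderiv n m {β} β := .prem rfl
        exact conjUpToE hβ (g χ).val (Nat.le_sub_one_of_lt (g χ).isLt)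
      rw [agIdx, dif_pos (g χ).isLt] at hfi
      have hfi2 : Hderiv n m {β} (f (g χ)) := by
        have : (⟨(g χ).val, (g χ).isLt⟩ : Fin m) = g χ := by simp
        rw [this] at hfi
        exact .mp (.agT _ _) hfi
      refine .mp (conjE ?_) hfi2
      exact List.mem_filter.mpr ⟨hχ, by simp⟩
    have hLconj : Hderiv n m {β} (listConj L) := conjI hLder
    have hdl : Hderiv n m (∅ : Set (Fml m)) ((listConj L).impF (fbot m)) := by
      refine dedList ?_
      rw [Set.empty_union]
      exact hd.mono (fun x hx => hx)
    have hbot2 : Hderiv n m {β} (fbot m) := .mp (hdl.mono (by simp)) hLconj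
    have hboxneg : Hderiv n m Δ0 (Fml.box β.negF) := by
      refine .nec (negI (ded ?_))
      rw [show (insert β (∅ : Set (Fml m))) = {β} by simp]
      exact hbot2
    have hdia : Fml.dia β ∈ Δ0 := by
      have hante : conjUpTo (diaAgIdx f) (m-1) ∈ Δ0 := by
        rw [mcs_conjUpTo hΔ0]
        intro j hj
        have hjm : j < m := by omega
        rw [diaAgIdx, dif_pos hjm]
        exact dia_transfer hΔ0 (hu ⟨j, hjm⟩) (h1 ⟨j, hjm⟩)
      exact mcs_mp hΔ0 (mcs_thm hΔ0 (.ioa f)) hante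
    exact (mcs_not hΔ0 (φ := Fml.dia β)).mpr (mcs_thm hΔ0 hboxneg) hdia
  obtain ⟨v, hsub, hv⟩ := lindenbaum hcon
  refine ⟨v, ⟨hv, ?_⟩, fun i χ hχ => hsub ⟨i, hχ⟩⟩
  intro χ hχ
  have hbb : Fml.box (Fml.box χ) ∈ u ⟨0, hm⟩ :=
    (hu ⟨0, hm⟩).2 _ (mcs_mp hΔ0 (mcs_thm hΔ0 (box4 χ)) hχ)
  have hag : Fml.ag ⟨0, hm⟩ (Fml.box χ) ∈ u ⟨0, hm⟩ :=
    mcs_mp (hu _).1 (mcs_thm (hu _).1 (.bridge _ (Fml.box χ))) hbb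
  exact hsub ⟨⟨0, hm⟩, hag⟩

theorem canon_apc (hΔ0 : MCS n m Δ0) (hn : 0 < n) (i : Fin m)
    (Δs : Fin (n+1) → Set (Fml m)) (hΔs : ∀ k, Δs k ∈ CW n m Δ0) :
    ∃ k j : Fin (n+1), k < j ∧ Rc i (Δs k) (Δs j) := by
  by_contra hc
  push_neg at hc
  have hsep : ∀ k j : Fin (n+1), ∃ χ : Fml m,
      k < j → (Fml.ag i χ ∈ Δs k ∧ χ.negF ∈ Δs j) := by
    intro k j
    by_cases hkj : k < j
    · have hnr := hc k j hkj
      rw [Rc] at hnr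
      push_neg at hnr
      obtain ⟨χ, h1, h2⟩ := hnr
      exact ⟨χ, fun _ => ⟨h1, (mcs_not (hΔs j).1).mp h2⟩⟩
    · exact ⟨fbot m, fun h => absurd h hkj⟩
  choose sep hsep using hsep
  set Lk : Fin (n+1) → List (Fml m) := fun k =>
    ((List.finRange (n+1)).filter (fun j => k < j)).map (fun j => sep k j) with hLk
  set f : ℕ → Fml m := fun k =>
    if hk : k < n+1 then listConj (Lk ⟨k, hk⟩) else fbot m with hfdef
  have hf : ∀ k : Fin (n+1), f k.val = listConj (Lk k) := by
    intro k
    simp only [hfdef, dif_pos k.isLt]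
  have hagf : ∀ k : Fin (n+1), Fml.ag i (f k.val) ∈ Δs k := by
    intro k
    rw [hf k]
    refine mcs_mp (hΔs k).1 (mcs_thm (hΔs k).1 (agListConj i _)) ?_
    refine mcs_closed_list (hΔs k).1 ?_
    intro α hα
    simp only [hLk] at hα
    obtain ⟨χ, hχ, rfl⟩ := List.mem_map.mp hα
    obtain ⟨j, hj, rfl⟩ := List.mem_map.mp hχ
    have hkj : k < j := by simpa using (List.mem_filter.mp hj).2
    exact (hsep k j hkj).1
  have hneg : ∀ (k j : Fin (n+1)), k < j → (f k.val).negF ∈ Δs j := by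
    intro k j hkj
    rw [hf k]
    have hmem : sep k j ∈ Lk k := by
      simp only [hLk]
      refine List.mem_map.mpr ⟨j, ?_, rfl⟩
      refine List.mem_filter.mpr ⟨List.mem_finRange j, by simpa using hkj⟩
    have := contrap (conjE (n := n) (Γ := Δs j) hmem)
    exact mcs_mp (hΔs j).1 (mcs_thm (hΔs j).1 this) (hsep k j hkj).2
  set ΔN := Δs ⟨n, by omega⟩ with hΔN
  have hante : apcAnte i f (n-1) ∈ ΔN := by
    rw [apcAnte, mcs_conjUpTo (hΔs _).1]
    intro j hj
    have hjn : j < n + 1 := by omega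
    have hcj : prefNegConj f j (Fml.ag i (f j)) ∈ Δs ⟨j, hjn⟩ := by
      rw [mcs_prefNegConj (hΔs _).1]
      constructor
      · intro l hl
        have hln : l < n + 1 := by omega
        have := hneg ⟨l, hln⟩ ⟨j, hjn⟩ (by simpa using hl)
        simpa using this
      · have := hagf ⟨j, hjn⟩
        simpa using this
    have hdia : Fml.dia (prefNegConj f j (Fml.ag i (f j))) ∈ Δ0 :=
      dia_transfer hΔ0 (hΔs ⟨j, hjn⟩) hcj
    exact (dia_mem_iff hΔ0 (hΔs _) _).mpr hdia
  have hdisj : disjUpTo f (n-1) ∈ ΔN :=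
    mcs_mp (hΔs _).1 (mcs_thm (hΔs _).1 (.apc hn i f)) hante
  rw [mcs_disjUpTo (hΔs _).1] at hdisj
  obtain ⟨k, hk, hfk⟩ := hdisj
  have hkn : k < n + 1 := by omega
  have := hneg ⟨k, hkn⟩ ⟨n, by omega⟩ (by simp; omega)
  simp only [Fin.val_mk] at this
  exact (mcs_not (hΔs ⟨n, by omega⟩).1).mpr this hfk

/-! ### the canonical model -/

noncomputable def canonM (hm : 0 < m) (hΔ0 : MCS n m Δ0) :
    ModelOn n m {Δ : Set (Fml m) // Δ ∈ CW n m Δ0} where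
  nonemp := ⟨⟨Δ0, cw_self hΔ0⟩⟩
  rel := fun i Δ Θ => Rc i Δ.1 Θ.1
  refl := fun i Δ => rc_refl Δ.2.1 i
  symm := fun i Δ Θ h => rc_symm Δ.2.1 Θ.2.1 h
  trans := fun i Δ Θ Ξ h1 h2 => rc_trans Δ.2.1 h1 h2
  ioa := fun u => by
    obtain ⟨v, hv, hR⟩ := canon_ioa hm hΔ0 (fun i => (u i).1) (fun i => (u i).2)
    exact ⟨⟨v, hv⟩, hR⟩
  apc := fun hn i w => by
    obtain ⟨k, j, hkj, hR⟩ := canon_apc hΔ0 hn i (fun k => (w k).1) (fun k => (w k).2)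
    exact ⟨k, j, hkj, hR⟩
  val := fun p => {Δ | Fml.pos p ∈ Δ.1}

theorem canon_truth (hm : 0 < m) (hΔ0 : MCS n m Δ0) :
    ∀ (φ : Fml m) (Δ : {Δ : Set (Fml m) // Δ ∈ CW n m Δ0}), φ ∈ Δ.1 →
      Sat (canonM hm hΔ0) Δ φ := by
  intro φ
  induction φ with
  | pos p => intro Δ h; exact h
  | neg p =>
    intro Δ h
    exact (mcs_not Δ.2.1 (φ := Fml.pos p)).mpr h
  | and φ ψ ih1 ih2 =>
    intro Δ h
    rw [mcs_and Δ.2.1] at h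
    exact ⟨ih1 Δ h.1, ih2 Δ h.2⟩
  | or φ ψ ih1 ih2 =>
    intro Δ h
    rw [mcs_or Δ.2.1] at h
    rcases h with h | h
    · exact Or.inl (ih1 Δ h)
    · exact Or.inr (ih2 Δ h)
  | box φ ih =>
    intro Δ h Θ
    refine ih Θ ?_
    exact unbox_mem hΔ0 Θ.2 ((box_transfer hΔ0 Δ.2 φ).mp h)
  | dia φ ih =>
    intro Δ h
    obtain ⟨Θ, hΘ, hφ⟩ := dia_witness hΔ0 Δ.2 h
    exact ⟨⟨Θ, hΘ⟩, ih _ hφ⟩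
  | ag i φ ih =>
    intro Δ h Θ hR
    exact ih Θ (hR φ h)
  | dag i φ ih =>
    intro Δ h
    obtain ⟨Θ, hΘ, hR, hφ⟩ := dag_witness hΔ0 Δ.2 h
    exact ⟨⟨Θ, hΘ⟩, hR, ih _ hφ⟩

theorem valid_imp_hderiv {φ : Fml m} (hm : 0 < m) (h : Valid n m φ) :
    Hderiv n m ∅ φ := by
  by_contra hc
  have hcon : Con n m {φ.negF} := by
    intro hbot
    rw [show ({φ.negF} : Set (Fml m)) = insert φ.negF ∅ by simp] at hbot
    have := negI (ded hbot)
    rw [Fml.negF_negF] at this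
    exact hc this
  obtain ⟨Δ0, hsub, hΔ0⟩ := lindenbaum hcon
  have hmem : φ.negF ∈ Δ0 := hsub rfl
  have hsat := canon_truth hm hΔ0 φ.negF ⟨Δ0, cw_self hΔ0⟩ hmem
  rw [sat_negF] at hsat
  exact hsat (h _ (canonM hm hΔ0) ⟨Δ0, cw_self hΔ0⟩)

end Canon2

theorem g3_equiv_hilbert' (n m : ℕ) (hm : 1 ≤ m) (φ : Fml m) (w : ℕ) :
    Seq G3flags n m 0 {(w, φ)} ↔ Hderiv n m ∅ φ := by
  constructor
  · intro hseq
    exact valid_imp_hderiv hm (seq_sound hseq)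
  · intro hh
    by_contra hns
    exact not_seq_countermodel hm hns (hderiv_valid hm hh)


/-- `G3Ldm_n^m` is sound and complete relative to the Hilbert calculus
`Ldm_n^m`: the sequent `w:φ` is derivable in `G3Ldm_n^m` iff `⊢_{Ldm_n^m} φ`. -/
theorem g3_equiv_hilbert (n m : ℕ) (hm : 1 ≤ m) (φ : Fml m) (w : ℕ) :
    Seq G3flags n m 0 {(w, φ)} ↔ Hderiv n m ∅ φ := by
  constructor
  · intro hseq
    exact valid_imp_hderiv hm (seq_sound hseq)
  · intro hh
    by_contra hns
    exact not_seq_countermodel hm hns (hderiv_valid hm hh)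

end Stit
end

section
/- The symmetry rule (sym_i) is admissible in G3Ldm_n^m: for every agent i ∈ Ag, if the labelled sequent R, R_i wu, R_i uw, Γ is derivable in G3Ldm_n^m, then R, R_i wu, Γ is derivable in G3Ldm_n^m. -/
namespace Stit

section SymAdmAux

variable {m : ℕ}

lemma mem_le_sum' {a : ℕ} {s : Multiset ℕ} (h : a ∈ s) : a ≤ s.sum := by
  induction s using Multiset.induction with
  | empty => simp at h
  | cons b t ih =>
    rw [Multiset.sum_cons]
    rcases Multiset.mem_cons.1 h with rfl | h
    · exact Nat.le_add_right _ _
    · exact (ih h).trans (Nat.le_add_left _ _)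

/-- All labels occurring in a labelled sequent. -/
def labls (R : RAtoms m) (Γ : LFmls m) : Multiset ℕ :=
  R.map (fun a => a.2.1) + R.map (fun a => a.2.2) + Γ.map (fun e => e.1)

lemma freshIn_of_big {v : ℕ} {R : RAtoms m} {Γ : LFmls m}
    (h : (labls R Γ).sum < v) : freshIn v R Γ := by
  refine ⟨fun a ha => ⟨fun e => ?_, fun e => ?_⟩, fun x hx => fun e => ?_⟩
  · have hmem : v ∈ labls R Γ := by
      simp only [labls, Multiset.mem_add, Multiset.mem_map]
      exact Or.inl (Or.inl ⟨a, ha, e⟩)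
    exact absurd (mem_le_sum' hmem) (Nat.not_le_of_lt h)
  · have hmem : v ∈ labls R Γ := by
      simp only [labls, Multiset.mem_add, Multiset.mem_map]
      exact Or.inl (Or.inr ⟨a, ha, e⟩)
    exact absurd (mem_le_sum' hmem) (Nat.not_le_of_lt h)
  · have hmem : v ∈ labls R Γ := by
      simp only [labls, Multiset.mem_add, Multiset.mem_map]
      exact Or.inr ⟨x, hx, e⟩
    exact absurd (mem_le_sum' hmem) (Nat.not_le_of_lt h)

@[simp] lemma substLab_self (x y : ℕ) : substLab x y x = y := by simp [substLab]

lemma substLab_ne {x y v : ℕ} (h : v ≠ x) : substLab x y v = v := by simp [substLab, h]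

lemma substR_cons (x y : ℕ) (a : RAtom m) (R : RAtoms m) :
    substR x y (a ::ₘ R) =
      ((a.1, substLab x y a.2.1, substLab x y a.2.2) : RAtom m) ::ₘ substR x y R := by
  simp [substR]

lemma substF_cons (x y : ℕ) (e : LFml m) (Γ : LFmls m) :
    substF x y (e ::ₘ Γ) = ((substLab x y e.1, e.2) : LFml m) ::ₘ substF x y Γ := by
  simp [substF]

lemma substR_eq_of_fresh {x y : ℕ} {R : RAtoms m}
    (h : ∀ a ∈ R, a.2.1 ≠ x ∧ a.2.2 ≠ x) : substR x y R = R := by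
  rw [substR]
  rw [show R.map (fun a => ((a.1, substLab x y a.2.1, substLab x y a.2.2) : RAtom m))
      = R.map id from Multiset.map_congr rfl (fun a ha => by
        simp [substLab_ne (h a ha).1, substLab_ne (h a ha).2, id])]
  exact Multiset.map_id R

lemma substF_eq_of_fresh {x y : ℕ} {Γ : LFmls m}
    (h : ∀ e ∈ Γ, e.1 ≠ x) : substF x y Γ = Γ := by
  rw [substF]
  rw [show Γ.map (fun e => ((substLab x y e.1, e.2) : LFml m))
      = Γ.map id from Multiset.map_congr rfl (fun e he => by
        simp [substLab_ne (h e he), id])]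
  exact Multiset.map_id Γ

lemma freshIn_subst {v x y : ℕ} {R : RAtoms m} {Γ : LFmls m}
    (hf : freshIn v R Γ) (hy : v ≠ y) :
    freshIn v (substR x y R) (substF x y Γ) := by
  obtain ⟨h1, h2⟩ := hf
  constructor
  · intro a ha
    rw [substR, Multiset.mem_map] at ha
    obtain ⟨b, hb, rfl⟩ := ha
    constructor
    · simp only [substLab]
      split
      · exact fun e => hy e.symm
      · exact (h1 b hb).1
    · simp only [substLab]
      split
      · exact fun e => hy e.symm
      · exact (h1 b hb).2
  · intro e he
    rw [substF, Multiset.mem_map] at he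
    obtain ⟨d, hd, rfl⟩ := he
    simp only [substLab]
    split
    · exact fun e => hy e.symm
    · exact h2 d hd

lemma substR_ioaAtoms (x y : ℕ) (u : Fin m → ℕ) (v : ℕ) :
    substR x y (ioaAtoms u v) =
      ioaAtoms (fun j => substLab x y (u j)) (substLab x y v) := by
  simp only [substR, ioaAtoms, Multiset.map_coe, List.map_map]
  rfl

lemma cons_rot3 {α : Type*} (a b c : α) (s : Multiset α) :
    a ::ₘ b ::ₘ c ::ₘ s = b ::ₘ c ::ₘ a ::ₘ s := by
  rw [Multiset.cons_swap a b, Multiset.cons_swap a c]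

lemma cons_rot4 {α : Type*} (a b c d : α) (s : Multiset α) :
    a ::ₘ b ::ₘ c ::ₘ d ::ₘ s = b ::ₘ c ::ₘ d ::ₘ a ::ₘ s := by
  rw [Multiset.cons_swap a b, Multiset.cons_swap a c, Multiset.cons_swap a d]

lemma cons_add_swap {α : Type*} (a : α) (s t : Multiset α) :
    a ::ₘ (s + t) = s + (a ::ₘ t) := (Multiset.add_cons a s t).symm

/-- Height-preserving admissibility of label substitution in `G3Ldm_n^m`. -/
lemma subst_adm (n : ℕ) : ∀ h (R : RAtoms m) (Γ : LFmls m),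
    SeqH G3flags n m h R Γ →
    ∀ x y, SeqH G3flags n m h (substR x y R) (substF x y Γ) := by
  intro h
  induction h using Nat.strong_induction_on with
  | _ h IH =>
    intro R Γ D x y
    cases D with
    | id w p =>
      rw [substF_cons, substF_cons]
      exact SeqH.id _ p
    | @andR h' R' Γ' w φ ψ D1 D2 =>
      rw [substF_cons]
      have H1 := IH h' (Nat.lt_succ_self h') _ _ D1 x y
      have H2 := IH h' (Nat.lt_succ_self h') _ _ D2 x y
      rw [substF_cons, substF_cons] at H1 H2
      exact SeqH.andR H1 H2
    | @orR h' R' Γ' w φ ψ D1 =>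
      rw [substF_cons]
      have H1 := IH h' (Nat.lt_succ_self h') _ _ D1 x y
      rw [substF_cons, substF_cons, substF_cons] at H1
      exact SeqH.orR H1
    | @boxR h' R' Γ' w v φ hv D1 =>
      rw [substF_cons]
      set v' := (labls R ((w, Fml.box φ) ::ₘ Γ')).sum + x + y + 1 with hv'def
      have hbig : (labls R ((w, Fml.box φ) ::ₘ Γ')).sum < v' := by omega
      have hfr : freshIn v' R ((w, Fml.box φ) ::ₘ Γ') := freshIn_of_big hbig
      have hvx : v' ≠ x := by omega
      have hvy : v' ≠ y := by omega
      have hw : w ≠ v := hv.2 (w, Fml.box φ) (Multiset.mem_cons_self _ _)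
      -- rename eigenvariable v to v'
      have H1 := IH h' (Nat.lt_succ_self h') _ _ D1 v v'
      rw [substF_cons, substF_cons,
          substR_eq_of_fresh (fun a ha => hv.1 a ha),
          substF_eq_of_fresh (fun e he => hv.2 e (Multiset.mem_cons_of_mem he))] at H1
      simp only [substLab_ne hw, substLab_self] at H1
      -- now substitute x ↦ y
      have H2 := IH h' (Nat.lt_succ_self h') _ _ H1 x y
      rw [substF_cons, substF_cons] at H2
      simp only [substLab_ne hvx] at H2
      have hfr2 := freshIn_subst (x := x) (y := y) hfr hvy
      rw [substF_cons] at hfr2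
      exact SeqH.boxR hfr2 H2
    | @diaR h' R' Γ' w u' φ D1 =>
      rw [substF_cons]
      have H1 := IH h' (Nat.lt_succ_self h') _ _ D1 x y
      rw [substF_cons, substF_cons] at H1
      exact SeqH.diaR H1
    | @agR h' R' Γ' w v i' φ hfl hv D1 =>
      rw [substF_cons]
      set v' := (labls R ((w, Fml.ag i' φ) ::ₘ Γ')).sum + x + y + 1 with hv'def
      have hbig : (labls R ((w, Fml.ag i' φ) ::ₘ Γ')).sum < v' := by omega
      have hfr : freshIn v' R ((w, Fml.ag i' φ) ::ₘ Γ') := freshIn_of_big hbig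
      have hvx : v' ≠ x := by omega
      have hvy : v' ≠ y := by omega
      have hw : w ≠ v := hv.2 (w, Fml.ag i' φ) (Multiset.mem_cons_self _ _)
      have H1 := IH h' (Nat.lt_succ_self h') _ _ D1 v v'
      rw [substR_cons, substF_cons,
          substR_eq_of_fresh (fun a ha => hv.1 a ha),
          substF_eq_of_fresh (fun e he => hv.2 e (Multiset.mem_cons_of_mem he))] at H1
      simp only [substLab_ne hw, substLab_self] at H1
      have H2 := IH h' (Nat.lt_succ_self h') _ _ H1 x y
      rw [substR_cons, substF_cons] at H2
      simp only [substLab_ne hvx] at H2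
      have hfr2 := freshIn_subst (x := x) (y := y) hfr hvy
      rw [substF_cons] at hfr2
      exact SeqH.agR hfl hfr2 H2
    | agRKeep hfl hv D1 => simp [G3flags] at hfl
    | @dagR h' R' Γ' w u' i' φ hfl D1 =>
      rw [substF_cons, substR_cons]
      have H1 := IH h' (Nat.lt_succ_self h') _ _ D1 x y
      rw [substR_cons, substF_cons, substF_cons] at H1
      exact SeqH.dagR hfl H1
    | @reflR h' R' Γ' i' w hfl D1 =>
      have H1 := IH h' (Nat.lt_succ_self h') _ _ D1 x y
      rw [substR_cons] at H1
      exact SeqH.reflR hfl H1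
    | @euclR h' R' Γ' i' w u' v hfl D1 =>
      rw [substR_cons, substR_cons]
      have H1 := IH h' (Nat.lt_succ_self h') _ _ D1 x y
      rw [substR_cons, substR_cons, substR_cons] at H1
      exact SeqH.euclR hfl H1
    | @ioaR h' R' Γ' hfl u' v hv D1 =>
      set v' := (labls R Γ).sum + x + y + 1 with hv'def
      have hbig : (labls R Γ).sum < v' := by omega
      have hfr : freshIn v' R Γ := freshIn_of_big hbig
      have hvx : v' ≠ x := by omega
      have hvy : v' ≠ y := by omega
      have H1 := IH h' (Nat.lt_succ_self h') _ _ D1 v v'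
      rw [show substR v v' (ioaAtoms u' v + R) =
            substR v v' (ioaAtoms u' v) + substR v v' R from Multiset.map_add _ _ _,
          substR_ioaAtoms, substR_eq_of_fresh (fun a ha => hv.1 a ha),
          substF_eq_of_fresh (fun e he => hv.2 e he), substLab_self] at H1
      have H2 := IH h' (Nat.lt_succ_self h') _ _ H1 x y
      rw [show substR x y (ioaAtoms (fun j => substLab v v' (u' j)) v' + R) =
            substR x y (ioaAtoms (fun j => substLab v v' (u' j)) v') + substR x y R
            from Multiset.map_add _ _ _,
          substR_ioaAtoms, substLab_ne hvx] at H2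
      exact SeqH.ioaR hfl _ v' (freshIn_subst hfr hvy) H2
    | @apcR h' R' Γ' hn i' ws prem =>
      refine SeqH.apcR hn i' (fun k => substLab x y (ws k)) (fun k j hkj => ?_)
      have H1 := IH h' (Nat.lt_succ_self h') _ _ (prem k j hkj) x y
      rw [substR_cons] at H1
      exact H1
    | prR hfl hreach D1 => simp [G3flags] at hfl

/-- Height-preserving admissibility of relational weakening in `G3Ldm_n^m`. -/
lemma weak_adm (n : ℕ) : ∀ h (R : RAtoms m) (Γ : LFmls m),
    SeqH G3flags n m h R Γ →
    ∀ a : RAtom m, SeqH G3flags n m h (a ::ₘ R) Γ := by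
  intro h
  induction h using Nat.strong_induction_on with
  | _ h IH =>
    intro R Γ D a
    cases D with
    | id w p => exact SeqH.id _ p
    | @andR h' R' Γ' w φ ψ D1 D2 =>
      exact SeqH.andR (IH h' (Nat.lt_succ_self h') _ _ D1 a)
        (IH h' (Nat.lt_succ_self h') _ _ D2 a)
    | @orR h' R' Γ' w φ ψ D1 =>
      exact SeqH.orR (IH h' (Nat.lt_succ_self h') _ _ D1 a)
    | @boxR h' R' Γ' w v φ hv D1 =>
      set v' := (labls (a ::ₘ R) ((w, Fml.box φ) ::ₘ Γ')).sum + 1 with hv'def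
      have hfr : freshIn v' (a ::ₘ R) ((w, Fml.box φ) ::ₘ Γ') :=
        freshIn_of_big (by omega)
      have hw : w ≠ v := hv.2 (w, Fml.box φ) (Multiset.mem_cons_self _ _)
      have H1 := subst_adm n h' _ _ D1 v v'
      rw [substF_cons, substF_cons,
          substR_eq_of_fresh (fun b hb => hv.1 b hb),
          substF_eq_of_fresh (fun e he => hv.2 e (Multiset.mem_cons_of_mem he))] at H1
      simp only [substLab_ne hw, substLab_self] at H1
      exact SeqH.boxR hfr (IH h' (Nat.lt_succ_self h') _ _ H1 a)
    | @diaR h' R' Γ' w u' φ D1 =>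
      exact SeqH.diaR (IH h' (Nat.lt_succ_self h') _ _ D1 a)
    | @agR h' R' Γ' w v i' φ hfl hv D1 =>
      set v' := (labls (a ::ₘ R) ((w, Fml.ag i' φ) ::ₘ Γ')).sum + 1 with hv'def
      have hfr : freshIn v' (a ::ₘ R) ((w, Fml.ag i' φ) ::ₘ Γ') :=
        freshIn_of_big (by omega)
      have hw : w ≠ v := hv.2 (w, Fml.ag i' φ) (Multiset.mem_cons_self _ _)
      have H1 := subst_adm n h' _ _ D1 v v'
      rw [substR_cons, substF_cons,
          substR_eq_of_fresh (fun b hb => hv.1 b hb),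
          substF_eq_of_fresh (fun e he => hv.2 e (Multiset.mem_cons_of_mem he))] at H1
      simp only [substLab_ne hw, substLab_self] at H1
      have H2 := IH h' (Nat.lt_succ_self h') _ _ H1 a
      rw [Multiset.cons_swap] at H2
      exact SeqH.agR hfl hfr H2
    | agRKeep hfl hv D1 => simp [G3flags] at hfl
    | @dagR h' R' Γ' w u' i' φ hfl D1 =>
      rw [Multiset.cons_swap]
      have H1 := IH h' (Nat.lt_succ_self h') _ _ D1 a
      rw [Multiset.cons_swap] at H1
      exact SeqH.dagR hfl H1
    | @reflR h' R' Γ' i' w hfl D1 =>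
      have H1 := IH h' (Nat.lt_succ_self h') _ _ D1 a
      rw [Multiset.cons_swap] at H1
      exact SeqH.reflR hfl H1
    | @euclR h' R' Γ' i' w u' v hfl D1 =>
      rw [cons_rot3]
      have H1 := IH h' (Nat.lt_succ_self h') _ _ D1 a
      rw [cons_rot4] at H1
      exact SeqH.euclR hfl H1
    | @ioaR h' R' Γ' hfl u' v hv D1 =>
      set v' := (labls (a ::ₘ R) Γ).sum + 1 with hv'def
      have hfr : freshIn v' (a ::ₘ R) Γ := freshIn_of_big (by omega)
      have H1 := subst_adm n h' _ _ D1 v v'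
      rw [show substR v v' (ioaAtoms u' v + R) =
            substR v v' (ioaAtoms u' v) + substR v v' R from Multiset.map_add _ _ _,
          substR_ioaAtoms, substR_eq_of_fresh (fun b hb => hv.1 b hb),
          substF_eq_of_fresh (fun e he => hv.2 e he), substLab_self] at H1
      have H2 := IH h' (Nat.lt_succ_self h') _ _ H1 a
      rw [cons_add_swap] at H2
      exact SeqH.ioaR hfl _ v' hfr H2
    | @apcR h' R' Γ' hn i' ws prem =>
      refine SeqH.apcR hn i' ws (fun k j hkj => ?_)
      have H1 := IH h' (Nat.lt_succ_self h') _ _ (prem k j hkj) a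
      rw [Multiset.cons_swap] at H1
      exact H1
    | prR hfl hreach D1 => simp [G3flags] at hfl

end SymAdmAux

/-- The symmetry rule `(sym_i)` is admissible in `G3Ldm_n^m`. -/
theorem g3_sym_admissible (n m : ℕ) (hm : 1 ≤ m)
    (i : Fin m) (w u : ℕ) (R : RAtoms m) (Γ : LFmls m)
    (hd : Seq G3flags n m (((i, w, u) : RAtom m) ::ₘ ((i, u, w) : RAtom m) ::ₘ R) Γ) :
    Seq G3flags n m (((i, w, u) : RAtom m) ::ₘ R) Γ := by
  obtain ⟨h, D⟩ := hd
  have D1 := weak_adm n h _ _ D ((i, w, w) : RAtom m)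
  rw [Multiset.cons_swap] at D1
  have D2 := SeqH.euclR (hfl := rfl) D1
  rw [Multiset.cons_swap] at D2
  exact ⟨h + 2, SeqH.reflR rfl D2⟩

end Stit
end

section
/- (refl_i)-Elimination: every labelled sequent Λ derivable in G3Ldm_n^m + PR is derivable in G3Ldm_n^m + PR without any use of the rules (refl_i), i ∈ Ag. -/
namespace Stit

section ReflElim

variable {m : ℕ}

lemma Reach.trans' {R : RAtoms m} {i : Fin m} {a b c : ℕ}
    (h1 : Reach R i a b) (h2 : Reach R i b c) : Reach R i a c := by
  induction h2 with
  | refl => exact h1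
  | fwd _ e ih => exact Reach.fwd ih e
  | bwd _ e ih => exact Reach.bwd ih e

lemma Reach.symm' {R : RAtoms m} {i : Fin m} {a b : ℕ}
    (h : Reach R i a b) : Reach R i b a := by
  induction h with
  | refl => exact .refl _
  | fwd _ e ih => exact Reach.trans' (Reach.bwd (.refl _) e) ih
  | bwd _ e ih => exact Reach.trans' (Reach.fwd (.refl _) e) ih

lemma Reach.mono {R S : RAtoms m} {i : Fin m} {a b : ℕ}
    (hs : ∀ x ∈ R, x ∈ S) (h : Reach R i a b) : Reach S i a b := by
  induction h with
  | refl => exact .refl _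
  | fwd _ e ih => exact .fwd ih (hs _ e)
  | bwd _ e ih => exact .bwd ih (hs _ e)

lemma Reach.cons_mono {R : RAtoms m} {c : RAtom m} {i : Fin m} {a b : ℕ}
    (h : Reach R i a b) : Reach (c ::ₘ R) i a b :=
  h.mono fun _ hx => Multiset.mem_cons_of_mem hx

lemma Reach.elimEdge {R : RAtoms m} {i j : Fin m} {x y w u : ℕ}
    (hxy : Reach R i x y) (h : Reach (((i, x, y) : RAtom m) ::ₘ R) j w u) :
    Reach R j w u := by
  induction h with
  | refl => exact .refl _
  | fwd _ e ih =>
      rcases Multiset.mem_cons.1 e with he | he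
      · simp only [Prod.mk.injEq] at he
        obtain ⟨rfl, rfl, rfl⟩ := he
        exact ih.trans' hxy
      · exact .fwd ih he
  | bwd _ e ih =>
      rcases Multiset.mem_cons.1 e with he | he
      · simp only [Prod.mk.injEq] at he
        obtain ⟨rfl, rfl, rfl⟩ := he
        exact ih.trans' hxy.symm'
      · exact .bwd ih he

lemma freshIn_of_cons {v : ℕ} {a : RAtom m} {R : RAtoms m} {Γ : LFmls m}
    (h : freshIn v (a ::ₘ R) Γ) : freshIn v R Γ :=
  ⟨fun b hb => h.1 b (Multiset.mem_cons_of_mem hb), h.2⟩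

lemma ms_swap23 {α : Type*} (a b c : α) (t : Multiset α) :
    a ::ₘ b ::ₘ c ::ₘ t = a ::ₘ c ::ₘ b ::ₘ t := by
  rw [Multiset.cons_swap b c]

lemma ms3 {α : Type*} (a b c : α) (t : Multiset α) :
    a ::ₘ b ::ₘ c ::ₘ t = b ::ₘ c ::ₘ a ::ₘ t := by
  rw [Multiset.cons_swap a b, Multiset.cons_swap a c]

lemma ms4 {α : Type*} (a b c d : α) (t : Multiset α) :
    a ::ₘ b ::ₘ c ::ₘ d ::ₘ t = d ::ₘ a ::ₘ b ::ₘ c ::ₘ t := by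
  rw [Multiset.cons_swap c d, Multiset.cons_swap b d, Multiset.cons_swap a d]

lemma SeqH.succ {fl : Flags} {n : ℕ} {h : ℕ} {R : RAtoms m} {Γ : LFmls m}
    (hd : SeqH fl n m h R Γ) : SeqH fl n m (h + 1) R Γ := by
  induction hd with
  | id w p => exact .id w p
  | andR _ _ ih1 ih2 => exact .andR ih1 ih2
  | orR _ ih => exact .orR ih
  | boxR hv _ ih => exact .boxR hv ih
  | diaR _ ih => exact .diaR ih
  | agR hfl hv _ ih => exact .agR hfl hv ih
  | agRKeep hfl hv _ ih => exact .agRKeep hfl hv ih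
  | dagR hfl _ ih => exact .dagR hfl ih
  | reflR hfl _ ih => exact .reflR hfl ih
  | euclR hfl _ ih => exact .euclR hfl ih
  | ioaR hfl u v hv _ ih => exact .ioaR hfl u v hv ih
  | apcR hn i w _ ih => exact .apcR hn i w fun k j hkj => ih k j hkj
  | prR hfl hreach _ ih => exact .prR hfl hreach ih

lemma SeqH.mono {fl : Flags} {n : ℕ} {h h' : ℕ} {R : RAtoms m} {Γ : LFmls m}
    (hle : h ≤ h') (hd : SeqH fl n m h R Γ) : SeqH fl n m h' R Γ := by
  induction hle with
  | refl => exact hd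
  | step _ ih => exact ih.succ

/-- Deletion of an atom `R_i x y` whose endpoints are already `i`-connected in the
rest of the relational part is height-preserving admissible (given `(Pr_i)`). -/
lemma delAtom {fl : Flags} {n : ℕ} (hpr : fl.pr = true) :
    ∀ (h : ℕ) (R : RAtoms m) (Γ : LFmls m) (i : Fin m) (x y : ℕ),
      SeqH fl n m h (((i, x, y) : RAtom m) ::ₘ R) Γ → Reach R i x y →
      SeqH fl n m h R Γ := by
  intro h
  induction h using Nat.strong_induction_on with
  | _ h IH =>
  intro R Γ i x y hd hr
  generalize hR : ((i, x, y) : RAtom m) ::ₘ R = R1 at hd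
  cases hd with
  | id w p => exact .id w p
  | @andR k R0 Γ0 w φ ψ p1 p2 =>
      subst hR
      exact .andR (IH _ (Nat.lt_succ_self _) _ _ _ _ _ p1 hr)
                  (IH _ (Nat.lt_succ_self _) _ _ _ _ _ p2 hr)
  | @orR k R0 Γ0 w φ ψ p =>
      subst hR
      exact .orR (IH _ (Nat.lt_succ_self _) _ _ _ _ _ p hr)
  | @boxR k R0 Γ0 w v φ hv p =>
      subst hR
      exact .boxR (freshIn_of_cons hv) (IH _ (Nat.lt_succ_self _) _ _ _ _ _ p hr)
  | @diaR k R0 Γ0 w u φ p =>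
      subst hR
      exact .diaR (IH _ (Nat.lt_succ_self _) _ _ _ _ _ p hr)
  | @agR k R0 Γ0 w v j φ hfl hv p =>
      subst hR
      rw [Multiset.cons_swap] at p
      exact .agR hfl (freshIn_of_cons hv)
        (IH _ (Nat.lt_succ_self _) _ _ _ _ _ p hr.cons_mono)
  | @agRKeep k R0 Γ0 w v j φ hfl hv p =>
      subst hR
      rw [Multiset.cons_swap] at p
      exact .agRKeep hfl (freshIn_of_cons hv)
        (IH _ (Nat.lt_succ_self _) _ _ _ _ _ p hr.cons_mono)
  | @dagR k R0 Γ0 w u j φ hfl p =>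
      rcases Multiset.cons_eq_cons.1 hR with ⟨hab, rfl⟩ | ⟨_, t, hRt, hR0⟩
      · simp only [Prod.mk.injEq] at hab
        obtain ⟨rfl, rfl, rfl⟩ := hab
        exact .prR hpr hr (IH _ (Nat.lt_succ_self _) _ _ _ _ _ p hr)
      · subst hRt; subst hR0
        rw [Multiset.cons_swap] at p
        exact .dagR hfl (IH _ (Nat.lt_succ_self _) _ _ _ _ _ p hr)
  | @reflR k R0 Γ0 j w hfl p =>
      subst hR
      rw [Multiset.cons_swap] at p
      exact .reflR hfl (IH _ (Nat.lt_succ_self _) _ _ _ _ _ p hr.cons_mono)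
  | @euclR k R0 Γ0 j w u v hfl p =>
      rcases Multiset.cons_eq_cons.1 hR with ⟨hab, rfl⟩ | ⟨_, t, hRt, hR0⟩
      · -- deleted atom is the first principal atom: (i,x,y) = (j,w,u)
        simp only [Prod.mk.injEq] at hab
        obtain ⟨rfl, rfl, rfl⟩ := hab
        rw [ms_swap23] at p
        have h1 := IH _ (Nat.lt_succ_self _) _ _ _ _ _ p hr.cons_mono
        exact (IH _ (Nat.lt_succ_self _) _ _ _ _ _ h1
          (hr.symm'.trans' (Reach.fwd (.refl _) (Multiset.mem_cons_self _ _)))).succ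
      · rcases Multiset.cons_eq_cons.1 hR0 with ⟨hab, rfl⟩ | ⟨_, s, hs1, hs2⟩
        · -- deleted atom is the second principal atom: (i,x,y) = (j,w,v)
          simp only [Prod.mk.injEq] at hab
          obtain ⟨rfl, rfl, rfl⟩ := hab
          subst hRt
          rw [ms3] at p
          have h1 := IH _ (Nat.lt_succ_self _) _ _ _ _ _ p hr.cons_mono
          exact (IH _ (Nat.lt_succ_self _) _ _ _ _ _ h1
            ((Reach.bwd (.refl _) (Multiset.mem_cons_self _ _)).trans' hr)).succ
        · -- deleted atom is in the context
          subst hs1; subst hs2; subst hRt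
          -- p : SeqH _ _ _ k ((j,w,u) ::ₘ (j,w,v) ::ₘ (j,u,v) ::ₘ (i,x,y) ::ₘ s) Γ0
          rw [ms4 ((j,w,u) : RAtom m) ((j,w,v) : RAtom m) ((j,u,v) : RAtom m)
            ((i,x,y) : RAtom m)] at p
          have hr' : Reach (((j,w,u) : RAtom m) ::ₘ ((j,w,v) : RAtom m) ::ₘ
              ((j,u,v) : RAtom m) ::ₘ s) i x y := by
            refine hr.mono fun a ha => ?_
            rcases Multiset.mem_cons.1 ha with h1 | h1
            · exact h1 ▸ Multiset.mem_cons_self _ _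
            rcases Multiset.mem_cons.1 h1 with h2 | h2
            · exact Multiset.mem_cons_of_mem (h2 ▸ Multiset.mem_cons_self _ _)
            · exact Multiset.mem_cons_of_mem (Multiset.mem_cons_of_mem
                (Multiset.mem_cons_of_mem h2))
          exact .euclR hfl (IH _ (Nat.lt_succ_self _) _ _ _ _ _ p hr')
  | @ioaR k R0 Γ0 hfl u v hv p =>
      subst hR
      rw [Multiset.add_cons] at p
      have hr' : Reach (ioaAtoms u v + R) i x y :=
        hr.mono fun a ha => Multiset.mem_add.2 (Or.inr ha)
      exact .ioaR hfl u v (freshIn_of_cons hv)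
        (IH _ (Nat.lt_succ_self _) _ _ _ _ _ p hr')
  | @apcR k R0 Γ0 hn j w p =>
      subst hR
      refine .apcR hn j w fun a b hab => ?_
      have pk := p a b hab
      rw [Multiset.cons_swap] at pk
      exact IH _ (Nat.lt_succ_self _) _ _ _ _ _ pk hr.cons_mono
  | @prR k R0 Γ0 w u j φ hfl hreach p =>
      subst hR
      exact .prR hfl (Reach.elimEdge hr hreach)
        (IH _ (Nat.lt_succ_self _) _ _ _ _ _ p hr)

lemma toNoRefl {n : ℕ} {h : ℕ} {R : RAtoms m} {Γ : LFmls m}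
    (hd : SeqH G3PRflags n m h R Γ) : SeqH G3PRnoReflFlags n m h R Γ := by
  induction hd with
  | id w p => exact .id w p
  | andR _ _ ih1 ih2 => exact .andR ih1 ih2
  | orR _ ih => exact .orR ih
  | boxR hv _ ih => exact .boxR hv ih
  | diaR _ ih => exact .diaR ih
  | agR _ hv _ ih => exact .agR rfl hv ih
  | agRKeep hfl _ _ _ => simp [G3PRflags] at hfl
  | dagR _ _ ih => exact .dagR rfl ih
  | reflR _ _ ih => exact (delAtom rfl _ _ _ _ _ _ ih (Reach.refl _)).succ
  | euclR _ _ ih => exact .euclR rfl ih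
  | ioaR _ u v hv _ ih => exact .ioaR rfl u v hv ih
  | apcR hn i w _ ih => exact .apcR hn i w fun k j hkj => ih k j hkj
  | prR _ hreach _ ih => exact .prR rfl hreach ih

end ReflElim

/-- `(refl_i)`-elimination: every sequent derivable in `G3Ldm_n^m + PR`
is derivable in `G3Ldm_n^m + PR` without any use of the rules `(refl_i)`. -/
theorem refl_elimination (n m : ℕ) (hm : 1 ≤ m)
    (R : RAtoms m) (Γ : LFmls m)
    (hd : Seq G3PRflags n m R Γ) :
    Seq G3PRnoReflFlags n m R Γ := by
  obtain ⟨h, hd⟩ := hd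
  exact ⟨h, toNoRefl hd⟩

end Stit
end
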